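/- arXiv:2112.15196 — 4 statements merged into one kernel-verified Lean document; each statement's English description precedes it below -/
import Mathlib

section
/- Let ρ, σ, q : [0, ℓ] → ℝ be continuous with ρ(x) ≥ ρ₀ > 0, σ(x) ≥ σ₀ > 0, q(x) ≥ 0. Let u ∈ C⁴([a,b]) (with [a,b] ⊆ [0,ℓ], a < b) be a nontrivial solution of (σ u'')'' - (q u')' - ρ u = 0 on [a,b]. Define Tu = (σ u'')' - q u'. If u(a) ≥ 0, u'(a) ≥ 0, u''(a) ≥ 0, Tu(a) ≥ 0 and not all four are zero, then u(x) > 0, u'(x) > 0, u''(x) > 0 and Tu(x) > 0 for all x ∈ (a, b]. -/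
open Real Set

private theorem cd_step {n : ℕ} {f : ℝ → ℝ} (h : ContDiff ℝ (n+1 : ℕ) f) :
    ContDiff ℝ (n : ℕ) (deriv f) := by
  have h4 : ContDiff ℝ ((n:ℕ∞)+1) f := by exact_mod_cast h
  exact_mod_cast (contDiff_succ_iff_deriv.mp h4).2.2

/-- If `f` is differentiable at `c`, `a < c`, and `f c < f x` for all `x ∈ (a,c)`,
then `deriv f c ≤ 0`. -/
private theorem deriv_le_zero_left {f : ℝ → ℝ} {a c : ℝ} (hac : a < c)
    (hd : DifferentiableAt ℝ f c) (h : ∀ x, a < x → x < c → f c < f x) :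
    deriv f c ≤ 0 := by
  have hs := hasDerivAt_iff_tendsto_slope.mp hd.hasDerivAt
  have hs' : Filter.Tendsto (slope f c) (nhdsWithin c (Iio c)) (nhds (deriv f c)) :=
    hs.mono_left (nhdsWithin_mono c (fun x hx => ne_of_lt hx))
  refine le_of_tendsto hs' ?_
  filter_upwards [Ioo_mem_nhdsLT_of_mem (show c ∈ Ioc a c from ⟨hac, le_refl c⟩)] with x hx
  have h1 : f c < f x := h x hx.1 hx.2
  have h2 : x - c < 0 := by linarith [hx.2]
  have : slope f c x = (f x - f c) / (x - c) := by
    rw [slope_def_field]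
  rw [this]
  exact (div_neg_of_pos_of_neg (by linarith) h2).le

/-- sign-propagation lemma: for a nontrivial C⁴ solution of
(σu'')'' - (qu')' - ρu = 0 on [a,b] with ρ, σ > 0, q ≥ 0, if u, u', u'' and
Tu = (σu'')' - qu' are nonnegative at a and not all zero, then all four are
positive on (a, b]. -/
theorem stmt_4 (ℓ a b : ℝ) (hℓ : 0 < ℓ) (hab : a < b) (hsub : Set.Icc a b ⊆ Set.Icc 0 ℓ)
    (ρ σ q u : ℝ → ℝ) (ρ₀ σ₀ : ℝ) (hρ₀ : 0 < ρ₀) (hσ₀ : 0 < σ₀)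
    (hρc : Continuous ρ) (hσc : ContDiff ℝ 2 σ) (hqc : ContDiff ℝ 1 q)
    (hρ : ∀ x ∈ Set.Icc 0 ℓ, ρ₀ ≤ ρ x)
    (hσ : ∀ x ∈ Set.Icc 0 ℓ, σ₀ ≤ σ x)
    (hq : ∀ x ∈ Set.Icc 0 ℓ, 0 ≤ q x)
    (hu : ContDiff ℝ 4 u)
    (hode : ∀ x ∈ Set.Icc a b,
      deriv (deriv (fun y => σ y * deriv (deriv u) y)) x
        - deriv (fun y => q y * deriv u y) x - ρ x * u x = 0)
    (hnontriv : ∃ x ∈ Set.Icc a b, u x ≠ 0)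
    (h0 : 0 ≤ u a) (h1 : 0 ≤ deriv u a) (h2 : 0 ≤ deriv (deriv u) a)
    (h3 : 0 ≤ deriv (fun y => σ y * deriv (deriv u) y) a - q a * deriv u a)
    (hnz : ¬(u a = 0 ∧ deriv u a = 0 ∧ deriv (deriv u) a = 0 ∧
      deriv (fun y => σ y * deriv (deriv u) y) a - q a * deriv u a = 0)) :
    ∀ x ∈ Set.Ioc a b,
      0 < u x ∧ 0 < deriv u x ∧ 0 < deriv (deriv u) x ∧
      0 < deriv (fun y => σ y * deriv (deriv u) y) x - q x * deriv u x := by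
  -- basic memberships
  have haM : a ∈ Icc a b := ⟨le_refl a, hab.le⟩
  have hbM : b ∈ Icc a b := ⟨hab.le, le_refl b⟩
  -- abbreviations
  set w2 : ℝ → ℝ := fun y => σ y * deriv (deriv u) y with hw2
  have hw2x : ∀ x, w2 x = σ x * deriv (deriv u) x := fun x => by rw [hw2]
  set F : ℝ → ℝ := fun x => deriv w2 x - q x * deriv u x with hFdef
  have hFx : ∀ x, F x = deriv w2 x - q x * deriv u x := fun x => by rw [hFdef]
  -- smoothness
  have hu3 : ContDiff ℝ 3 (deriv u) := cd_step (n := 3) hu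
  have hu2 : ContDiff ℝ 2 (deriv (deriv u)) := cd_step (n := 2) hu3
  have hw2c : ContDiff ℝ 2 w2 := by rw [hw2]; exact hσc.mul hu2
  have hw2c1 : ContDiff ℝ 1 (deriv w2) := cd_step (n := 1) hw2c
  have hu3' : ContDiff ℝ 1 (deriv u) := hu3.of_le (by norm_num)
  have hquc : ContDiff ℝ 1 (fun y => q y * deriv u y) := hqc.mul hu3'
  have hFc : ContDiff ℝ 1 F := by rw [hFdef]; exact hw2c1.sub hquc
  have hud : Differentiable ℝ u := hu.differentiable (by norm_num)
  have hu'd : Differentiable ℝ (deriv u) := hu3.differentiable (by norm_num)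
  have hu''d : Differentiable ℝ (deriv (deriv u)) := hu2.differentiable (by norm_num)
  have hw2d : Differentiable ℝ w2 := hw2c.differentiable (by norm_num)
  have hdw2d : Differentiable ℝ (deriv w2) := hw2c1.differentiable (by norm_num)
  have hqud : Differentiable ℝ (fun y => q y * deriv u y) := hquc.differentiable (by norm_num)
  have hFd : Differentiable ℝ F := hFc.differentiable (by norm_num)
  -- pointwise positivity of σ, ρ, nonnegativity of q on [a,b]
  have hσpos : ∀ x ∈ Icc a b, 0 < σ x := fun x hx => lt_of_lt_of_le hσ₀ (hσ x (hsub hx))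
  have hσle : ∀ x ∈ Icc a b, σ₀ ≤ σ x := fun x hx => hσ x (hsub hx)
  have hρpos : ∀ x ∈ Icc a b, 0 < ρ x := fun x hx => lt_of_lt_of_le hρ₀ (hρ x (hsub hx))
  have hqnn : ∀ x ∈ Icc a b, 0 ≤ q x := fun x hx => hq x (hsub hx)
  -- derivative identities
  have hdw2 : ∀ x, deriv w2 x = F x + q x * deriv u x := fun x => by rw [hFx]; ring
  have hderivF : ∀ x ∈ Icc a b, deriv F x = ρ x * u x := by
    intro x hx
    have hds : deriv F x = deriv (deriv w2) x - deriv (fun y => q y * deriv u y) x := by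
      rw [hFdef]
      exact deriv_sub (hdw2d x) (hqud x)
    have ho := hode x hx
    rw [hds]; linarith
  -- upper bounds for q and ρ on [0,ℓ]
  have h0ℓ : (0:ℝ) ∈ Icc 0 ℓ := ⟨le_refl 0, hℓ.le⟩
  obtain ⟨xq, hxqm, hxq⟩ := (isCompact_Icc (a := (0:ℝ)) (b := ℓ)).exists_isMaxOn
    ⟨0, h0ℓ⟩ hqc.continuous.continuousOn
  obtain ⟨xr, hxrm, hxr⟩ := (isCompact_Icc (a := (0:ℝ)) (b := ℓ)).exists_isMaxOn
    ⟨0, h0ℓ⟩ hρc.continuousOn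
  set Q : ℝ := q xq with hQdef
  set R : ℝ := ρ xr with hRdef
  have hqQ : ∀ x ∈ Icc 0 ℓ, q x ≤ Q := fun x hx => hxq hx
  have hρR : ∀ x ∈ Icc 0 ℓ, ρ x ≤ R := fun x hx => hxr hx
  have hQ0 : 0 ≤ Q := le_trans (hq 0 h0ℓ) (hqQ 0 h0ℓ)
  have hRpos : 0 < R := lt_of_lt_of_le hρ₀ (le_trans (hρ 0 h0ℓ) (hρR 0 h0ℓ))
  have hinvσ : 0 < 1/σ₀ := by positivity
  set K : ℝ := 2 + 1/σ₀ + Q + R with hKdef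
  have hK1 : 1 < K := by simp only [hKdef]; linarith
  have hKpos : 0 < K := by linarith
  have hKQ1 : Q + 1 < K := by simp only [hKdef]; linarith
  have hKR : R < K := by simp only [hKdef]; linarith
  have hσ₀K : 1 < σ₀ * K := by
    have hmm : σ₀ * (1/σ₀) = 1 := by field_simp
    simp only [hKdef]
    nlinarith [mul_nonneg hσ₀.le hQ0, mul_pos hσ₀ hRpos, hσ₀]
  -- exponential perturbation
  have hED : ∀ ε : ℝ, ∀ x : ℝ, HasDerivAt (fun t => ε * Real.exp (K * t))
      (K * (ε * Real.exp (K * x))) x := by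
    intro ε x
    have h1 : HasDerivAt (fun t : ℝ => K * t) K x := by
      simpa using (hasDerivAt_id x).const_mul K
    have h3 := (h1.exp).const_mul ε
    rw [show K * (ε * Real.exp (K * x)) = ε * (Real.exp (K * x) * K) by ring]
    exact h3
  have hEc : Continuous (fun x : ℝ => Real.exp (K * x)) :=
    Real.continuous_exp.comp (continuous_const.mul continuous_id)
  -- MAIN ε-ARGUMENT: all four quantities stay above -ε e^{Kx}
  have hall : ∀ ε : ℝ, 0 < ε → ∀ x ∈ Icc a b,
      0 < min (min (u x + ε * Real.exp (K * x)) (deriv u x + ε * Real.exp (K * x)))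
        (min (w2 x + ε * Real.exp (K * x)) (F x + ε * Real.exp (K * x))) := by
    intro ε hε
    set e : ℝ → ℝ := fun x => ε * Real.exp (K * x) with hedef
    have hepos : ∀ x, 0 < e x := fun x => by
      rw [hedef]; positivity
    have hec : Continuous e := by rw [hedef]; exact continuous_const.mul hEc
    set g : ℝ → ℝ := fun x =>
      min (min (u x + e x) (deriv u x + e x)) (min (w2 x + e x) (F x + e x)) with hgdef
    have hgx : ∀ x, g x = min (min (u x + e x) (deriv u x + e x))
        (min (w2 x + e x) (F x + e x)) := fun x => by rw [hgdef]
    have hgc : Continuous g := by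
      rw [hgdef]
      exact ((hud.continuous.add hec).min (hu'd.continuous.add hec)).min
        ((hw2d.continuous.add hec).min (hFd.continuous.add hec))
    -- initial positivity
    have hw2a : 0 ≤ w2 a := by rw [hw2x]; exact mul_nonneg (hσpos a haM).le h2
    have hFa : 0 ≤ F a := by rw [hFx]; exact h3
    have hga : 0 < g a := by
      rw [hgx]
      have := hepos a
      exact lt_min (lt_min (by linarith) (by linarith)) (lt_min (by linarith) (by linarith))
    intro x hx
    by_contra hcon
    push_neg at hcon
    -- the set of bad points
    set S : Set ℝ := {y | y ∈ Icc a b ∧ g y ≤ 0} with hSdef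
    have hSne : S.Nonempty := ⟨x, hx, hcon⟩
    have hScl : IsClosed S := by
      rw [hSdef]
      exact isClosed_Icc.inter (isClosed_le hgc continuous_const)
    have hSbd : BddBelow S := ⟨a, fun y hy => hy.1.1⟩
    set c : ℝ := sInf S with hcdef
    have hcS : c ∈ S := hScl.csInf_mem hSne hSbd
    have hcI : c ∈ Icc a b := hcS.1
    have hgc0 : g c ≤ 0 := hcS.2
    have hac : a < c := by
      rcases lt_or_eq_of_le hcI.1 with h | h
      · exact h
      · exfalso; rw [← h] at hgc0; linarith [hga]
    have hpos : ∀ y, a ≤ y → y < c → 0 < g y := by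
      intro y hy1 hy2
      by_contra h
      push_neg at h
      have hyS : y ∈ S := ⟨⟨hy1, le_trans hy2.le hcI.2⟩, h⟩
      exact absurd (csInf_le hSbd hyS) (not_le.mpr hy2)
    -- limit from the left: each component is ≥ 0 at c
    have hlim : ∀ f : ℝ → ℝ, Continuous f → (∀ y, a ≤ y → y < c → 0 < f y) → 0 ≤ f c := by
      intro f hf hp
      have ht : Filter.Tendsto f (nhdsWithin c (Iio c)) (nhds (f c)) :=
        (hf.tendsto c).mono_left nhdsWithin_le_nhds
      refine ge_of_tendsto ht ?_
      filter_upwards [Ioo_mem_nhdsLT_of_mem (show c ∈ Ioc a c from ⟨hac, le_refl c⟩)] with y hy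
      exact (hp y hy.1.le hy.2).le
    have hg0c : 0 ≤ u c + e c := hlim _ (hud.continuous.add hec) (fun y h1' h2' =>
      lt_of_lt_of_le (hpos y h1' h2') (by rw [hgx]; exact (min_le_left _ _).trans (min_le_left _ _)))
    have hg1c : 0 ≤ deriv u c + e c := hlim _ (hu'd.continuous.add hec) (fun y h1' h2' =>
      lt_of_lt_of_le (hpos y h1' h2') (by rw [hgx]; exact (min_le_left _ _).trans (min_le_right _ _)))
    have hg2c : 0 ≤ w2 c + e c := hlim _ (hw2d.continuous.add hec) (fun y h1' h2' =>
      lt_of_lt_of_le (hpos y h1' h2') (by rw [hgx]; exact (min_le_right _ _).trans (min_le_left _ _)))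
    have hg3c : 0 ≤ F c + e c := hlim _ (hFd.continuous.add hec) (fun y h1' h2' =>
      lt_of_lt_of_le (hpos y h1' h2') (by rw [hgx]; exact (min_le_right _ _).trans (min_le_right _ _)))
    have hecpos : 0 < e c := hepos c
    have hσc' : 0 < σ c := hσpos c hcI
    have hσcle : σ₀ ≤ σ c := hσle c hcI
    have hq0c : 0 ≤ q c := hqnn c hcI
    have hqcQ : q c ≤ Q := hqQ c (hsub hcI)
    have hρcpos : 0 < ρ c := hρpos c hcI
    have hρcR : ρ c ≤ R := hρR c (hsub hcI)
    -- derivative of e at c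
    have heD : HasDerivAt e (K * e c) c := by
      rw [hedef]; exact hED ε c
    -- which component vanishes at c?
    rw [hgx] at hgc0
    rcases min_le_iff.mp hgc0 with hAB | hCD
    · rcases min_le_iff.mp hAB with hA | hB
      · -- u c + e c = 0
        have hfc : u c + e c = 0 := le_antisymm hA hg0c
        have hD : HasDerivAt (fun y => u y + e y) (deriv u c + K * e c) c :=
          (hud c).hasDerivAt.add heD
        have hd1 : deriv (fun y => u y + e y) c ≤ 0 := by
          refine deriv_le_zero_left hac hD.differentiableAt ?_
          intro y hy1 hy2
          have h1' := hpos y hy1.le hy2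
          rw [hgx] at h1'
          have h2' : g y ≤ u y + e y := by
            rw [hgx]; exact (min_le_left _ _).trans (min_le_left _ _)
          rw [hgx] at h2'
          show u c + e c < u y + e y
          rw [hfc]
          calc (0:ℝ) < _ := h1'
          _ ≤ _ := h2'
        rw [hD.deriv] at hd1
        have hKe : e c < K * e c := by
          have := mul_lt_mul_of_pos_right hK1 hecpos
          linarith
        linarith
      · -- u' c + e c = 0
        have hfc : deriv u c + e c = 0 := le_antisymm hB hg1c
        have hD : HasDerivAt (fun y => deriv u y + e y) (deriv (deriv u) c + K * e c) c :=
          (hu'd c).hasDerivAt.add heD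
        have hd1 : deriv (fun y => deriv u y + e y) c ≤ 0 := by
          refine deriv_le_zero_left hac hD.differentiableAt ?_
          intro y hy1 hy2
          have h1' := hpos y hy1.le hy2
          rw [hgx] at h1'
          have h2' : g y ≤ deriv u y + e y := by
            rw [hgx]; exact (min_le_left _ _).trans (min_le_right _ _)
          rw [hgx] at h2'
          show deriv u c + e c < deriv u y + e y
          rw [hfc]
          calc (0:ℝ) < _ := h1'
          _ ≤ _ := h2'
        rw [hD.deriv] at hd1
        -- bound: σ c * u'' c = w2 c ≥ -e c  ⇒  u'' c + K e c > 0
        have hw2cval : w2 c = σ c * deriv (deriv u) c := hw2x c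
        have hb : 0 ≤ σ c * deriv (deriv u) c + e c := by rw [← hw2cval]; exact hg2c
        have hgoal : 0 < deriv (deriv u) c + K * e c := by
          by_contra hcon2
          push_neg at hcon2
          -- multiply by σ c > 0
          have hm1 : σ c * (deriv (deriv u) c + K * e c) ≤ 0 :=
            mul_nonpos_of_nonneg_of_nonpos hσc'.le hcon2
          rw [mul_add] at hm1
          have hm2 : σ₀ * (K * e c) ≤ σ c * (K * e c) :=
            mul_le_mul_of_nonneg_right hσcle (mul_pos hKpos hecpos).le
          have hm3 : 0 < (σ₀ * K - 1) * e c := mul_pos (sub_pos.mpr hσ₀K) hecpos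
          rw [sub_mul, one_mul] at hm3
          rw [← mul_assoc] at hm2
          linarith
        linarith
    · rcases min_le_iff.mp hCD with hC | hD'
      · -- w2 c + e c = 0
        have hfc : w2 c + e c = 0 := le_antisymm hC hg2c
        have hD : HasDerivAt (fun y => w2 y + e y) (deriv w2 c + K * e c) c :=
          (hw2d c).hasDerivAt.add heD
        have hd1 : deriv (fun y => w2 y + e y) c ≤ 0 := by
          refine deriv_le_zero_left hac hD.differentiableAt ?_
          intro y hy1 hy2
          have h1' := hpos y hy1.le hy2
          rw [hgx] at h1'
          have h2' : g y ≤ w2 y + e y := by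
            rw [hgx]; exact (min_le_right _ _).trans (min_le_left _ _)
          rw [hgx] at h2'
          show w2 c + e c < w2 y + e y
          rw [hfc]
          calc (0:ℝ) < _ := h1'
          _ ≤ _ := h2'
        rw [hD.deriv, hdw2 c] at hd1
        -- bound q c * u' c ≥ -(Q * e c)
        have hqb : -(Q * e c) ≤ q c * deriv u c := by
          have hh1 : 0 ≤ q c * (deriv u c + e c) := mul_nonneg hq0c hg1c
          have hh2 : q c * e c ≤ Q * e c := mul_le_mul_of_nonneg_right hqcQ hecpos.le
          rw [mul_add] at hh1
          linarith
        have hKe : (Q + 1) * e c < K * e c := mul_lt_mul_of_pos_right hKQ1 hecpos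
        have hKe' : Q * e c + e c ≤ K * e c := by rw [add_mul, one_mul] at hKe; linarith
        linarith [hg3c]
      · -- F c + e c = 0
        have hfc : F c + e c = 0 := le_antisymm hD' hg3c
        have hD : HasDerivAt (fun y => F y + e y) (deriv F c + K * e c) c :=
          (hFd c).hasDerivAt.add heD
        have hd1 : deriv (fun y => F y + e y) c ≤ 0 := by
          refine deriv_le_zero_left hac hD.differentiableAt ?_
          intro y hy1 hy2
          have h1' := hpos y hy1.le hy2
          rw [hgx] at h1'
          have h2' : g y ≤ F y + e y := by
            rw [hgx]; exact (min_le_right _ _).trans (min_le_right _ _)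
          rw [hgx] at h2'
          show F c + e c < F y + e y
          rw [hfc]
          calc (0:ℝ) < _ := h1'
          _ ≤ _ := h2'
        rw [hD.deriv, hderivF c hcI] at hd1
        -- bound ρ c * u c ≥ -(R * e c)
        have hrb : -(R * e c) ≤ ρ c * u c := by
          have hh1 : 0 ≤ ρ c * (u c + e c) := mul_nonneg hρcpos.le hg0c
          have hh2 : ρ c * e c ≤ R * e c := mul_le_mul_of_nonneg_right hρcR hecpos.le
          rw [mul_add] at hh1
          linarith
        have hKe : R * e c < K * e c := mul_lt_mul_of_pos_right hKR hecpos
        linarith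
  -- NONNEGATIVITY on [a,b]
  have key : ∀ x ∈ Icc a b, 0 ≤ u x ∧ 0 ≤ deriv u x ∧ 0 ≤ w2 x ∧ 0 ≤ F x := by
    intro x hx
    have hcomp : ∀ v : ℝ, (∀ ε : ℝ, 0 < ε → -(ε * Real.exp (K * x)) < v) → 0 ≤ v := by
      intro v hv
      by_contra hneg
      push_neg at hneg
      have hex : 0 < Real.exp (K * x) := Real.exp_pos _
      have hε : 0 < (-v) / (2 * Real.exp (K * x)) := by
        apply div_pos (by linarith) (by positivity)
      have := hv _ hε
      have heq : (-v) / (2 * Real.exp (K * x)) * Real.exp (K * x) = -v / 2 := by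
        field_simp
      rw [heq] at this
      linarith
    refine ⟨hcomp _ ?_, hcomp _ ?_, hcomp _ ?_, hcomp _ ?_⟩ <;> intro ε hε <;>
      have h := hall ε hε x hx
    · have h1' := h.trans_le ((min_le_left _ _).trans (min_le_left _ _))
      linarith [h1']
    · have h1' := h.trans_le ((min_le_left _ _).trans (min_le_right _ _))
      linarith [h1']
    · have h1' := h.trans_le ((min_le_right _ _).trans (min_le_left _ _))
      linarith [h1']
    · have h1' := h.trans_le ((min_le_right _ _).trans (min_le_right _ _))
      linarith [h1']
  have hunn : ∀ x ∈ Icc a b, 0 ≤ u x := fun x hx => (key x hx).1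
  have hu'nn : ∀ x ∈ Icc a b, 0 ≤ deriv u x := fun x hx => (key x hx).2.1
  have hw2nn : ∀ x ∈ Icc a b, 0 ≤ w2 x := fun x hx => (key x hx).2.2.1
  have hFnn : ∀ x ∈ Icc a b, 0 ≤ F x := fun x hx => (key x hx).2.2.2
  have hu''nn : ∀ x ∈ Icc a b, 0 ≤ deriv (deriv u) x := by
    intro x hx
    have h1' := hw2nn x hx
    rw [hw2x] at h1'
    by_contra hcon
    push_neg at hcon
    have := mul_neg_of_pos_of_neg (hσpos x hx) hcon
    linarith
  -- MONOTONICITY on [a,b]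
  have hIoosub : Ioo a b ⊆ Icc a b := Ioo_subset_Icc_self
  have hFmono : MonotoneOn F (Icc a b) := by
    refine monotoneOn_of_deriv_nonneg (convex_Icc a b) hFd.continuous.continuousOn
      (hFd.differentiableOn) ?_
    intro x hx
    rw [interior_Icc] at hx
    rw [hderivF x (hIoosub hx)]
    exact mul_nonneg (hρpos x (hIoosub hx)).le (hunn x (hIoosub hx))
  have hw2mono : MonotoneOn w2 (Icc a b) := by
    refine monotoneOn_of_deriv_nonneg (convex_Icc a b) hw2d.continuous.continuousOn
      (hw2d.differentiableOn) ?_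
    intro x hx
    rw [interior_Icc] at hx
    rw [hdw2 x]
    exact add_nonneg (hFnn x (hIoosub hx))
      (mul_nonneg (hqnn x (hIoosub hx)) (hu'nn x (hIoosub hx)))
  have hu'mono : MonotoneOn (deriv u) (Icc a b) := by
    refine monotoneOn_of_deriv_nonneg (convex_Icc a b) hu'd.continuous.continuousOn
      (hu'd.differentiableOn) ?_
    intro x hx
    rw [interior_Icc] at hx
    exact hu''nn x (hIoosub hx)
  have humono : MonotoneOn u (Icc a b) := by
    refine monotoneOn_of_deriv_nonneg (convex_Icc a b) hud.continuous.continuousOn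
      (hud.differentiableOn) ?_
    intro x hx
    rw [interior_Icc] at hx
    exact hu'nn x (hIoosub hx)
  -- strict positivity propagators
  have hIocIcc : ∀ x ∈ Ioc a b, x ∈ Icc a b := fun x hx => ⟨hx.1.le, hx.2⟩
  have hstrictu : (∀ x ∈ Ioo a b, 0 < deriv u x) → ∀ x ∈ Ioc a b, 0 < u x := by
    intro h x hx
    have hsm : StrictMonoOn u (Icc a b) :=
      strictMonoOn_of_deriv_pos (convex_Icc a b) hud.continuous.continuousOn
        (fun y hy => by rw [interior_Icc] at hy; exact h y hy)
    exact lt_of_le_of_lt h0 (hsm haM (hIocIcc x hx) hx.1)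
  have hstrictu' : (∀ x ∈ Ioo a b, 0 < deriv (deriv u) x) → ∀ x ∈ Ioc a b, 0 < deriv u x := by
    intro h x hx
    have hsm : StrictMonoOn (deriv u) (Icc a b) :=
      strictMonoOn_of_deriv_pos (convex_Icc a b) hu'd.continuous.continuousOn
        (fun y hy => by rw [interior_Icc] at hy; exact h y hy)
    exact lt_of_le_of_lt h1 (hsm haM (hIocIcc x hx) hx.1)
  have hw2a : 0 ≤ w2 a := by rw [hw2x]; exact mul_nonneg (hσpos a haM).le h2
  have hstrictw2 : (∀ x ∈ Ioo a b, 0 < deriv w2 x) → ∀ x ∈ Ioc a b, 0 < w2 x := by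
    intro h x hx
    have hsm : StrictMonoOn w2 (Icc a b) :=
      strictMonoOn_of_deriv_pos (convex_Icc a b) hw2d.continuous.continuousOn
        (fun y hy => by rw [interior_Icc] at hy; exact h y hy)
    exact lt_of_le_of_lt hw2a (hsm haM (hIocIcc x hx) hx.1)
  have hFa : 0 ≤ F a := by rw [hFx]; exact h3
  have hstrictF : (∀ x ∈ Ioo a b, 0 < deriv F x) → ∀ x ∈ Ioc a b, 0 < F x := by
    intro h x hx
    have hsm : StrictMonoOn F (Icc a b) :=
      strictMonoOn_of_deriv_pos (convex_Icc a b) hFd.continuous.continuousOn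
        (fun y hy => by rw [interior_Icc] at hy; exact h y hy)
    exact lt_of_le_of_lt hFa (hsm haM (hIocIcc x hx) hx.1)
  -- chains
  have hw2_to_u'' : (∀ x ∈ Ioc a b, 0 < w2 x) → ∀ x ∈ Ioc a b, 0 < deriv (deriv u) x := by
    intro h x hx
    have h1' := h x hx
    rw [hw2x] at h1'
    by_contra hcon
    push_neg at hcon
    have := mul_nonpos_of_nonneg_of_nonpos (hσpos x (hIocIcc x hx)).le hcon
    linarith
  have hchain_u_F : (∀ x ∈ Ioc a b, 0 < u x) → ∀ x ∈ Ioc a b, 0 < F x := by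
    intro h
    refine hstrictF ?_
    intro x hx
    rw [hderivF x (hIoosub hx)]
    exact mul_pos (hρpos x (hIoosub hx)) (h x ⟨hx.1, hx.2.le⟩)
  have hchain_F_w2 : (∀ x ∈ Ioc a b, 0 < F x) → ∀ x ∈ Ioc a b, 0 < w2 x := by
    intro h
    refine hstrictw2 ?_
    intro x hx
    rw [hdw2 x]
    have h1' := h x ⟨hx.1, hx.2.le⟩
    have h2' := mul_nonneg (hqnn x (hIoosub hx)) (hu'nn x (hIoosub hx))
    linarith
  have hchain_u''_u' : (∀ x ∈ Ioc a b, 0 < deriv (deriv u) x) →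
      ∀ x ∈ Ioc a b, 0 < deriv u x := by
    intro h
    refine hstrictu' ?_
    intro x hx
    exact h x ⟨hx.1, hx.2.le⟩
  have hchain_u'_u : (∀ x ∈ Ioc a b, 0 < deriv u x) → ∀ x ∈ Ioc a b, 0 < u x := by
    intro h
    refine hstrictu ?_
    intro x hx
    exact h x ⟨hx.1, hx.2.le⟩
  -- CLAIM A: u > 0 on (a,b]
  have claimA : ∀ x ∈ Ioc a b, 0 < u x := by
    rcases lt_or_eq_of_le h0 with hA | hA
    · -- u a > 0
      intro x hx
      exact lt_of_lt_of_le hA (humono haM (hIocIcc x hx) hx.1.le)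
    · rcases lt_or_eq_of_le h1 with hB | hB
      · -- u' a > 0
        refine hstrictu ?_
        intro x hx
        exact lt_of_lt_of_le hB (hu'mono haM (hIoosub hx) hx.1.le)
      · rcases lt_or_eq_of_le h2 with hC | hC
        · -- u'' a > 0
          have hw2apos : 0 < w2 a := by
            rw [hw2x]; exact mul_pos (hσpos a haM) hC
          have hw2pos : ∀ x ∈ Ioc a b, 0 < w2 x := fun x hx =>
            lt_of_lt_of_le hw2apos (hw2mono haM (hIocIcc x hx) hx.1.le)
          exact hchain_u'_u (hchain_u''_u' (hw2_to_u'' hw2pos))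
        · rcases lt_or_eq_of_le h3 with hD | hD
          · -- F a > 0
            have hFapos : 0 < F a := by rw [hFx]; exact hD
            have hFpos : ∀ x ∈ Ioc a b, 0 < F x := fun x hx =>
              lt_of_lt_of_le hFapos (hFmono haM (hIocIcc x hx) hx.1.le)
            exact hchain_u'_u (hchain_u''_u' (hw2_to_u'' (hchain_F_w2 hFpos)))
          · exact absurd ⟨hA.symm, hB.symm, hC.symm, hD.symm⟩ hnz
  -- CONCLUSION
  have hFpos := hchain_u_F claimA
  have hw2pos := hchain_F_w2 hFpos
  have hu''pos := hw2_to_u'' hw2pos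
  have hu'pos := hchain_u''_u' hu''pos
  intro x hx
  refine ⟨claimA x hx, hu'pos x hx, hu''pos x hx, ?_⟩
  have := hFpos x hx
  rw [hFx] at this
  exact this
end

section
/- Let ρ, σ, q : [0, ℓ] → ℝ be continuous with ρ, σ > 0 and q ≥ 0, and let λ > 0. Then the space of solutions φ ∈ C⁴([0,ℓ]) of (σ φ'')'' - (q φ')' = λ ρ φ satisfying the three boundary conditions φ(0) = φ'(0) = φ'(ℓ) = 0 is at most one-dimensional. -/
open Real Set MeasureTheory intervalIntegral

private lemma cd_succ {n : ℕ} {f : ℝ → ℝ} (h : ContDiff ℝ ((n:ℕ)+1 : ℕ) f) :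
    ContDiff ℝ (n : ℕ) (deriv f) := by
  have h' : ContDiff ℝ ((n : WithTop ℕ∞) + 1) f := by exact_mod_cast h
  exact (contDiff_succ_iff_deriv.mp h').2.2

private lemma cd4_3 {f : ℝ → ℝ} (h : ContDiff ℝ 4 f) : ContDiff ℝ 3 (deriv f) := by
  have h' : ContDiff ℝ ((3:ℕ)+1 : ℕ) f := by exact_mod_cast h
  exact_mod_cast cd_succ h'

private lemma cd3_2 {f : ℝ → ℝ} (h : ContDiff ℝ 3 f) : ContDiff ℝ 2 (deriv f) := by
  have h' : ContDiff ℝ ((2:ℕ)+1 : ℕ) f := by exact_mod_cast h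
  exact_mod_cast cd_succ h'

private lemma cd2_1 {f : ℝ → ℝ} (h : ContDiff ℝ 2 f) : ContDiff ℝ 1 (deriv f) := by
  have h' : ContDiff ℝ ((1:ℕ)+1 : ℕ) f := by exact_mod_cast h
  exact_mod_cast cd_succ h'

private lemma deriv_comb {f g : ℝ → ℝ} (hf : Differentiable ℝ f) (hg : Differentiable ℝ g)
    (c d : ℝ) :
    deriv (fun x => c * f x + d * g x) = fun x => c * deriv f x + d * deriv g x := by
  funext x
  rw [deriv_fun_add ((hf x).const_mul c) ((hg x).const_mul d), deriv_const_mul c (hf x),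
    deriv_const_mul d (hg x)]

private lemma nonneg_prop (ℓ : ℝ) (hℓ : 0 < ℓ) (ρ σ q : ℝ → ℝ) (lam : ℝ) (hlam : 0 < lam)
    (hρc : Continuous ρ) (hσc : ContDiff ℝ 2 σ) (hqc : ContDiff ℝ 1 q)
    (hρ : ∀ x ∈ Icc 0 ℓ, 0 < ρ x) (hσ : ∀ x ∈ Icc 0 ℓ, 0 < σ x)
    (hq : ∀ x ∈ Icc 0 ℓ, 0 ≤ q x)
    (u : ℝ → ℝ) (hu : ContDiff ℝ 4 u)
    (hode : ∀ x ∈ Icc 0 ℓ,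
      deriv (deriv (fun y => σ y * deriv (deriv u) y)) x
        - deriv (fun y => q y * deriv u y) x = lam * ρ x * u x)
    (h0 : 0 ≤ u 0) (h1 : 0 ≤ deriv u 0)
    (h2 : 0 ≤ σ 0 * deriv (deriv u) 0)
    (h3 : 0 ≤ deriv (fun y => σ y * deriv (deriv u) y) 0 - q 0 * deriv u 0) :
    ∀ x ∈ Icc 0 ℓ, 0 ≤ u x ∧ 0 ≤ deriv u x ∧ 0 ≤ σ x * deriv (deriv u) x ∧
      0 ≤ deriv (fun y => σ y * deriv (deriv u) y) x - q x * deriv u x := by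
  set z : ℝ → ℝ := fun x => σ x * deriv (deriv u) x with hzdef
  set v : ℝ → ℝ := fun x => deriv z x - q x * deriv u x with hvdef
  have hz0 : 0 ≤ z 0 := by simp only [hzdef]; exact h2
  have hv0 : 0 ≤ v 0 := by simp only [hvdef]; exact h3
  -- smoothness
  have hu1 : ContDiff ℝ 3 (deriv u) := cd4_3 hu
  have hu2 : ContDiff ℝ 2 (deriv (deriv u)) := cd3_2 hu1
  have hz : ContDiff ℝ 2 z := hσc.mul hu2
  have hz1 : ContDiff ℝ 1 (deriv z) := cd2_1 hz
  have hqu : ContDiff ℝ 1 (fun x => q x * deriv u x) := hqc.mul (hu1.of_le (by norm_num))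
  have hv : ContDiff ℝ 1 v := hz1.sub hqu
  clear_value z v
  -- derivative identities
  have hderiv_z : ∀ x, deriv z x = v x + q x * deriv u x := by
    intro x; simp only [hvdef]; ring
  have hderiv_v : ∀ x ∈ Icc 0 ℓ, deriv v x = lam * ρ x * u x := by
    intro x hx
    have d1 : DifferentiableAt ℝ (deriv z) x := (hz1.differentiable one_ne_zero) x
    have d2 : DifferentiableAt ℝ (fun y => q y * deriv u y) x := (hqu.differentiable one_ne_zero) x
    have e : deriv v x = deriv (deriv z) x - deriv (fun y => q y * deriv u y) x := by
      rw [hvdef]; exact deriv_fun_sub d1 d2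
    rw [e]
    exact hode x hx
  -- continuity and differentiability
  have hud : Differentiable ℝ u := hu.differentiable (by norm_num)
  have hu1d : Differentiable ℝ (deriv u) := hu1.differentiable (by norm_num)
  have hzd : Differentiable ℝ z := hz.differentiable (by norm_num)
  have hvd : Differentiable ℝ v := hv.differentiable one_ne_zero
  have hcu : Continuous u := hu.continuous
  have hcu1 : Continuous (deriv u) := hu1.continuous
  have hcu2 : Continuous (deriv (deriv u)) := hu2.continuous
  have hcz : Continuous z := hz.continuous
  have hcz1 : Continuous (deriv z) := hz1.continuous
  have hcv : Continuous v := hv.continuous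
  have hcv1 : Continuous (deriv v) := hv.continuous_deriv le_rfl
  -- bound constant
  have hcont : ContinuousOn (fun x => max (max 1 (1 / σ x)) (max (q x) (lam * ρ x)))
      (Icc (0:ℝ) ℓ) :=
    (continuousOn_const.sup (continuousOn_const.div hσc.continuous.continuousOn
      (fun x hx => (hσ x hx).ne'))).sup
      (hqc.continuous.continuousOn.sup (continuousOn_const.mul hρc.continuousOn))
  obtain ⟨x₀, hx₀, hCb'⟩ := isCompact_Icc.exists_isMaxOn (nonempty_Icc.2 (le_of_lt hℓ)) hcont
  have hCb : ∀ x ∈ Icc (0:ℝ) ℓ, max (max 1 (1 / σ x)) (max (q x) (lam * ρ x)) ≤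
      max (max 1 (1 / σ x₀)) (max (q x₀) (lam * ρ x₀)) := fun x hx => (isMaxOn_iff.mp hCb') x hx
  set C : ℝ := max (max 1 (1 / σ x₀)) (max (q x₀) (lam * ρ x₀)) with hCdef
  have hC1 : (1:ℝ) ≤ C := le_trans (le_max_left _ _) (le_max_left _ _)
  have hC0 : (0:ℝ) < C := lt_of_lt_of_le one_pos hC1
  have hCσ : ∀ x ∈ Icc 0 ℓ, 1 / σ x ≤ C :=
    fun x hx => le_trans (le_trans (le_max_right _ _) (le_max_left _ _)) (hCb x hx)
  have hCq : ∀ x ∈ Icc 0 ℓ, q x ≤ C :=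
    fun x hx => le_trans (le_trans (le_max_left _ _) (le_max_right _ _)) (hCb x hx)
  have hCρ : ∀ x ∈ Icc 0 ℓ, lam * ρ x ≤ C :=
    fun x hx => le_trans (le_trans (le_max_right _ _) (le_max_right _ _)) (hCb x hx)
  clear_value C
  -- the deviation function
  set F : ℝ → ℝ := fun x =>
    max 0 (-(u x)) + max 0 (-(deriv u x)) + max 0 (-(z x)) + max 0 (-(v x)) with hFdef
  have hFc : Continuous F :=
    (((continuous_const.max hcu.neg).add (continuous_const.max hcu1.neg)).add
      (continuous_const.max hcz.neg)).add (continuous_const.max hcv.neg)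
  clear_value F
  have hFnn : ∀ x, 0 ≤ F x := by
    intro x
    have a1 := le_max_left 0 (-(u x))
    have a2 := le_max_left 0 (-(deriv u x))
    have a3 := le_max_left 0 (-(z x))
    have a4 := le_max_left 0 (-(v x))
    simp only [hFdef]; linarith
  have hF0 : F 0 = 0 := by
    simp only [hFdef]
    rw [max_eq_left (neg_nonpos.2 h0), max_eq_left (neg_nonpos.2 h1),
      max_eq_left (neg_nonpos.2 hz0), max_eq_left (neg_nonpos.2 hv0)]
    ring
  have hterm : ∀ x, -(u x) ≤ F x ∧ -(deriv u x) ≤ F x ∧ -(z x) ≤ F x ∧ -(v x) ≤ F x := by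
    intro x
    have a1 := le_max_left 0 (-(u x))
    have a2 := le_max_left 0 (-(deriv u x))
    have a3 := le_max_left 0 (-(z x))
    have a4 := le_max_left 0 (-(v x))
    have b1 := le_max_right 0 (-(u x))
    have b2 := le_max_right 0 (-(deriv u x))
    have b3 := le_max_right 0 (-(z x))
    have b4 := le_max_right 0 (-(v x))
    simp only [hFdef]
    exact ⟨by linarith, by linarith, by linarith, by linarith⟩
  -- pointwise bounds on negated derivatives
  have bd_u : ∀ t ∈ Icc 0 ℓ, -(deriv u t) ≤ 2 * C * F t := by
    intro t _
    have h := (hterm t).2.1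
    nlinarith [hFnn t]
  have bd_u1 : ∀ t ∈ Icc 0 ℓ, -(deriv (deriv u) t) ≤ 2 * C * F t := by
    intro t ht
    have hσt := hσ t ht
    have e : deriv (deriv u) t = z t * (1 / σ t) := by
      simp only [hzdef]; field_simp
    have h1 : -(z t) ≤ F t := (hterm t).2.2.1
    have h2 : 1 / σ t ≤ C := hCσ t ht
    have h2' : 0 ≤ 1 / σ t := by positivity
    have hF := hFnn t
    rw [e]
    have e2 : -(z t * (1 / σ t)) = (-(z t)) * (1 / σ t) := by ring
    rw [e2]
    have s1 : (-(z t)) * (1 / σ t) ≤ F t * (1 / σ t) := mul_le_mul_of_nonneg_right h1 h2'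
    have s2 : F t * (1 / σ t) ≤ F t * C := mul_le_mul_of_nonneg_left h2 hF
    nlinarith [mul_nonneg hC0.le hF]
  have bd_z : ∀ t ∈ Icc 0 ℓ, -(deriv z t) ≤ 2 * C * F t := by
    intro t ht
    have h1 : -(v t) ≤ F t := (hterm t).2.2.2
    have h2 : -(deriv u t) ≤ F t := (hterm t).2.1
    have hqt := hq t ht
    have hqC := hCq t ht
    have hF := hFnn t
    rw [hderiv_z t]
    have s1 : q t * (-(deriv u t)) ≤ q t * F t := mul_le_mul_of_nonneg_left h2 hqt
    have s2 : q t * F t ≤ C * F t := mul_le_mul_of_nonneg_right hqC hF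
    nlinarith [mul_nonneg hC0.le hF]
  have bd_v : ∀ t ∈ Icc 0 ℓ, -(deriv v t) ≤ 2 * C * F t := by
    intro t ht
    have h1 : -(u t) ≤ F t := (hterm t).1
    have hρt := (hρ t ht).le
    have hρC := hCρ t ht
    have hF := hFnn t
    rw [hderiv_v t ht]
    have hlρ : 0 ≤ lam * ρ t := mul_nonneg hlam.le hρt
    have s1 : (lam * ρ t) * (-(u t)) ≤ (lam * ρ t) * F t := mul_le_mul_of_nonneg_left h1 hlρ
    have s2 : (lam * ρ t) * F t ≤ C * F t := mul_le_mul_of_nonneg_right hρC hF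
    nlinarith [mul_nonneg hC0.le hF]
  -- component estimate
  have comp : ∀ w : ℝ → ℝ, Differentiable ℝ w → Continuous (deriv w) → 0 ≤ w 0 →
      (∀ t ∈ Icc 0 ℓ, -(deriv w t) ≤ 2 * C * F t) →
      ∀ x ∈ Icc 0 ℓ, max 0 (-(w x)) ≤ 2 * C * ∫ t in (0:ℝ)..x, F t := by
    intro w hdiff hdc hw0 hbd x hx
    have hx0 : 0 ≤ x := hx.1
    have hInt : ∫ t in (0:ℝ)..x, deriv w t = w x - w 0 :=
      integral_deriv_eq_sub (fun t _ => hdiff t) (hdc.intervalIntegrable 0 x)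
    have hmono : ∫ t in (0:ℝ)..x, (-(deriv w t)) ≤ ∫ t in (0:ℝ)..x, 2 * C * F t :=
      integral_mono_on hx0 ((hdc.neg).intervalIntegrable 0 x)
        (((continuous_const.mul hFc)).intervalIntegrable 0 x)
        (fun t ht => hbd t ⟨ht.1, ht.2.trans hx.2⟩)
    rw [intervalIntegral.integral_neg, hInt, intervalIntegral.integral_const_mul] at hmono
    have hFpos : 0 ≤ ∫ t in (0:ℝ)..x, F t :=
      intervalIntegral.integral_nonneg hx0 (fun t _ => hFnn t)
    apply max_le
    · positivity
    · linarith
  -- master inequality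
  have master : ∀ x ∈ Icc 0 ℓ, F x ≤ 8 * C * ∫ t in (0:ℝ)..x, F t := by
    intro x hx
    have c1 := comp u hud hcu1 h0 bd_u x hx
    have c2 := comp (deriv u) hu1d hcu2 h1 bd_u1 x hx
    have c3 := comp z hzd hcz1 hz0 bd_z x hx
    have c4 := comp v hvd hcv1 hv0 bd_v x hx
    have e : F x = max 0 (-(u x)) + max 0 (-(deriv u x)) + max 0 (-(z x)) + max 0 (-(v x)) := by
      rw [hFdef]
    rw [e]
    linarith
  -- Gronwall
  set G : ℝ → ℝ := fun x => ∫ t in (0:ℝ)..x, F t with hGdef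
  clear_value G
  have hG : ∀ x, HasDerivAt G (F x) x := by
    intro x; rw [hGdef]; exact (hFc.integral_hasStrictDerivAt 0 x).hasDerivAt
  have hGd : Differentiable ℝ G := fun x => (hG x).differentiableAt
  have hGc : Continuous G := hGd.continuous
  have hGnn : ∀ x ∈ Icc 0 ℓ, 0 ≤ G x := by
    intro x hx; rw [hGdef]
    exact intervalIntegral.integral_nonneg hx.1 (fun t _ => hFnn t)
  have hG0 : G 0 = 0 := by rw [hGdef]; simp
  set h : ℝ → ℝ := fun y => Real.exp (-(8 * C) * y) * G y with hhdef
  clear_value h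
  have hder : ∀ y, HasDerivAt h
      (Real.exp (-(8 * C) * y) * (-(8 * C) * 1) * G y + Real.exp (-(8 * C) * y) * F y) y := by
    intro y
    rw [hhdef]
    have d1 : HasDerivAt (fun y : ℝ => -(8 * C) * y) (-(8 * C) * 1) y :=
      (hasDerivAt_id y).const_mul (-(8 * C))
    exact (d1.exp.mul (hG y))
  have hanti : AntitoneOn h (Icc 0 ℓ) := by
    apply antitoneOn_of_deriv_nonpos (convex_Icc 0 ℓ)
    · rw [hhdef]
      exact (((Real.continuous_exp.comp (continuous_const.mul continuous_id)).mul hGc)).continuousOn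
    · intro y _
      exact (hder y).differentiableAt.differentiableWithinAt
    · intro y hy
      rw [interior_Icc] at hy
      rw [(hder y).deriv]
      have hm := master y ⟨hy.1.le, hy.2.le⟩
      have hE : (0:ℝ) < Real.exp (-(8 * C) * y) := Real.exp_pos _
      have eG : G y = ∫ t in (0:ℝ)..y, F t := by rw [hGdef]
      rw [← eG] at hm
      nlinarith [mul_le_mul_of_nonneg_left hm hE.le]
  -- conclude F = 0 on Icc
  have hFzero : ∀ x ∈ Icc 0 ℓ, F x = 0 := by
    intro x hx
    have h1' : h x ≤ h 0 := hanti (left_mem_Icc.2 hℓ.le) hx hx.1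
    have h0' : h 0 = 0 := by rw [hhdef]; simp [hG0]
    have hE : (0:ℝ) < Real.exp (-(8 * C) * x) := Real.exp_pos _
    have hGx : 0 ≤ G x := hGnn x hx
    have hGx0 : G x = 0 := by
      rw [h0'] at h1'
      simp only [hhdef] at h1'
      nlinarith
    have hm := master x hx
    have eG : G x = ∫ t in (0:ℝ)..x, F t := by rw [hGdef]
    rw [← eG, hGx0] at hm
    have := hFnn x
    linarith
  -- unpack
  intro x hx
  have hFx := hFzero x hx
  have a1 := le_max_left 0 (-(u x))
  have a2 := le_max_left 0 (-(deriv u x))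
  have a3 := le_max_left 0 (-(z x))
  have a4 := le_max_left 0 (-(v x))
  have b1 := le_max_right 0 (-(u x))
  have b2 := le_max_right 0 (-(deriv u x))
  have b3 := le_max_right 0 (-(z x))
  have b4 := le_max_right 0 (-(v x))
  simp only [hFdef] at hFx
  have r1 : 0 ≤ u x := by linarith
  have r2 : 0 ≤ deriv u x := by linarith
  have r3 : 0 ≤ z x := by linarith
  have r4 : 0 ≤ v x := by linarith
  refine ⟨r1, r2, ?_, ?_⟩
  · simpa only [hzdef] using r3
  · have := r4
    simp only [hvdef, hzdef] at this
    simpa only [hzdef] using this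

private lemma strict_pos (ℓ : ℝ) (hℓ : 0 < ℓ) (ρ σ q : ℝ → ℝ) (lam : ℝ) (hlam : 0 < lam)
    (hρc : Continuous ρ) (hσc : ContDiff ℝ 2 σ) (hqc : ContDiff ℝ 1 q)
    (hρ : ∀ x ∈ Icc 0 ℓ, 0 < ρ x) (hσ : ∀ x ∈ Icc 0 ℓ, 0 < σ x)
    (hq : ∀ x ∈ Icc 0 ℓ, 0 ≤ q x)
    (u : ℝ → ℝ) (hu : ContDiff ℝ 4 u)
    (hode : ∀ x ∈ Icc 0 ℓ,
      deriv (deriv (fun y => σ y * deriv (deriv u) y)) x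
        - deriv (fun y => q y * deriv u y) x = lam * ρ x * u x)
    (h0 : u 0 = 0) (h1 : deriv u 0 = 0) (h2 : deriv (deriv u) 0 = 0)
    (h3 : deriv (fun y => σ y * deriv (deriv u) y) 0 - q 0 * deriv u 0 = 1) :
    0 < deriv u ℓ := by
  have nn := nonneg_prop ℓ hℓ ρ σ q lam hlam hρc hσc hqc hρ hσ hq u hu hode
    (le_of_eq h0.symm) (le_of_eq h1.symm) (by rw [h2]; simp) (by rw [h3]; norm_num)
  set z : ℝ → ℝ := fun x => σ x * deriv (deriv u) x with hzdef
  set v : ℝ → ℝ := fun x => deriv z x - q x * deriv u x with hvdef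
  have hu1 : ContDiff ℝ 3 (deriv u) := cd4_3 hu
  have hu2 : ContDiff ℝ 2 (deriv (deriv u)) := cd3_2 hu1
  have hz : ContDiff ℝ 2 z := hσc.mul hu2
  have hz1 : ContDiff ℝ 1 (deriv z) := cd2_1 hz
  have hqu : ContDiff ℝ 1 (fun x => q x * deriv u x) := hqc.mul (hu1.of_le (by norm_num))
  have hv : ContDiff ℝ 1 v := hz1.sub hqu
  clear_value z v
  have hz0 : z 0 = 0 := by rw [hzdef]; simp only; rw [h2]; ring
  have hv0 : v 0 = 1 := by simp only [hvdef]; exact h3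
  have hderiv_z : ∀ x, deriv z x = v x + q x * deriv u x := by
    intro x; simp only [hvdef]; ring
  have hderiv_v : ∀ x ∈ Icc 0 ℓ, deriv v x = lam * ρ x * u x := by
    intro x hx
    have d1 : DifferentiableAt ℝ (deriv z) x := (hz1.differentiable one_ne_zero) x
    have d2 : DifferentiableAt ℝ (fun y => q y * deriv u y) x := (hqu.differentiable one_ne_zero) x
    have e : deriv v x = deriv (deriv z) x - deriv (fun y => q y * deriv u y) x := by
      rw [hvdef]; exact deriv_fun_sub d1 d2
    rw [e]
    exact hode x hx
  have hu1d : Differentiable ℝ (deriv u) := hu1.differentiable (by norm_num)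
  have hzd : Differentiable ℝ z := hz.differentiable (by norm_num)
  have hvd : Differentiable ℝ v := hv.differentiable one_ne_zero
  have hcu2 : Continuous (deriv (deriv u)) := hu2.continuous
  have hcz1 : Continuous (deriv z) := hz1.continuous
  have hcv : Continuous v := hv.continuous
  -- nonnegativity in terms of z, v
  have nnu : ∀ x ∈ Icc 0 ℓ, 0 ≤ u x := fun x hx => (nn x hx).1
  have nnu1 : ∀ x ∈ Icc 0 ℓ, 0 ≤ deriv u x := fun x hx => (nn x hx).2.1
  have nnz : ∀ x ∈ Icc 0 ℓ, 0 ≤ z x := by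
    intro x hx; rw [hzdef]; exact (nn x hx).2.2.1
  -- v is at least 1
  have hvmono : MonotoneOn v (Icc 0 ℓ) := by
    apply monotoneOn_of_deriv_nonneg (convex_Icc 0 ℓ) hcv.continuousOn hvd.differentiableOn
    intro x hx
    rw [interior_Icc] at hx
    rw [hderiv_v x ⟨hx.1.le, hx.2.le⟩]
    exact mul_nonneg (mul_nonneg hlam.le (hρ x ⟨hx.1.le, hx.2.le⟩).le)
      (nnu x ⟨hx.1.le, hx.2.le⟩)
  have hv1 : ∀ x ∈ Icc 0 ℓ, 1 ≤ v x := by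
    intro x hx
    have := hvmono (left_mem_Icc.2 hℓ.le) hx hx.1
    rw [hv0] at this
    exact this
  -- z is at least x
  have hzlow : ∀ x ∈ Icc 0 ℓ, x ≤ z x := by
    intro x hx
    have hInt : ∫ t in (0:ℝ)..x, deriv z t = z x - z 0 :=
      integral_deriv_eq_sub (fun t _ => hzd t) (hcz1.intervalIntegrable 0 x)
    have hmono : ∫ t in (0:ℝ)..x, (1:ℝ) ≤ ∫ t in (0:ℝ)..x, deriv z t := by
      apply integral_mono_on hx.1 intervalIntegrable_const (hcz1.intervalIntegrable 0 x)
      intro t ht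
      have ht' : t ∈ Icc 0 ℓ := ⟨ht.1, ht.2.trans hx.2⟩
      rw [hderiv_z t]
      have := hv1 t ht'
      have hq' : 0 ≤ q t * deriv u t := mul_nonneg (hq t ht') (nnu1 t ht')
      linarith
    rw [intervalIntegral.integral_const, hInt, hz0] at hmono
    simp at hmono
    linarith
  -- upper bound for σ
  obtain ⟨x₁, hx₁, hM'⟩ := isCompact_Icc.exists_isMaxOn (nonempty_Icc.2 hℓ.le)
    hσc.continuous.continuousOn
  have hM : ∀ x ∈ Icc (0:ℝ) ℓ, σ x ≤ σ x₁ := fun x hx => (isMaxOn_iff.mp hM') x hx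
  have hM0 : 0 < σ x₁ := hσ x₁ hx₁
  -- integrate up
  have hInt2 : ∫ t in (0:ℝ)..ℓ, deriv (deriv u) t = deriv u ℓ - deriv u 0 :=
    integral_deriv_eq_sub (fun t _ => hu1d t) (hcu2.intervalIntegrable 0 ℓ)
  have hmono2 : ∫ t in (0:ℝ)..ℓ, t / σ x₁ ≤ ∫ t in (0:ℝ)..ℓ, deriv (deriv u) t := by
    apply integral_mono_on hℓ.le ((continuous_id.div_const _).intervalIntegrable 0 ℓ)
      (hcu2.intervalIntegrable 0 ℓ)
    intro t ht
    have e : deriv (deriv u) t = z t / σ t := by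
      rw [hzdef]; simp only
      rw [mul_comm, mul_div_assoc, div_self (hσ t ht).ne', mul_one]
    rw [e]
    exact div_le_div₀ (nnz t ht) (hzlow t ht) (hσ t ht) (hM t ht)
  rw [intervalIntegral.integral_div, integral_id, hInt2, h1] at hmono2
  have hpos : 0 < (ℓ ^ 2 - 0 ^ 2) / 2 / σ x₁ :=
    div_pos (div_pos (by nlinarith : (0:ℝ) < ℓ ^ 2 - 0 ^ 2) two_pos) hM0
  linarith

private lemma diff_pack (σ q : ℝ → ℝ) (hσc : ContDiff ℝ 2 σ) (hqc : ContDiff ℝ 1 q)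
    (f : ℝ → ℝ) (hf : ContDiff ℝ 4 f) :
    Differentiable ℝ f ∧ Differentiable ℝ (deriv f) ∧ Differentiable ℝ (deriv (deriv f)) ∧
    Differentiable ℝ (fun y => σ y * deriv (deriv f) y) ∧
    Differentiable ℝ (deriv (fun y => σ y * deriv (deriv f) y)) ∧
    Differentiable ℝ (fun y => q y * deriv f y) := by
  have h1 := cd4_3 hf
  have h2 := cd3_2 h1
  have hz : ContDiff ℝ 2 (fun y => σ y * deriv (deriv f) y) := hσc.mul h2
  exact ⟨hf.differentiable (by norm_num), h1.differentiable (by norm_num),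
    h2.differentiable (by norm_num), hz.differentiable (by norm_num),
    (cd2_1 hz).differentiable one_ne_zero,
    (hqc.mul (h1.of_le (by norm_num))).differentiable one_ne_zero⟩

private lemma comb_lin (σ q : ℝ → ℝ) (hσc : ContDiff ℝ 2 σ) (hqc : ContDiff ℝ 1 q)
    (φ ψ : ℝ → ℝ) (hφ : ContDiff ℝ 4 φ) (hψ : ContDiff ℝ 4 ψ) (c d : ℝ) :
    deriv (fun x => c * φ x + d * ψ x) = (fun x => c * deriv φ x + d * deriv ψ x)
  ∧ deriv (deriv (fun x => c * φ x + d * ψ x))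
      = (fun x => c * deriv (deriv φ) x + d * deriv (deriv ψ) x)
  ∧ deriv (fun y => σ y * deriv (deriv (fun x => c * φ x + d * ψ x)) y)
      = (fun y => c * deriv (fun y => σ y * deriv (deriv φ) y) y
          + d * deriv (fun y => σ y * deriv (deriv ψ) y) y)
  ∧ ∀ x, deriv (deriv (fun y => σ y * deriv (deriv (fun x => c * φ x + d * ψ x)) y)) x
        - deriv (fun y => q y * deriv (fun x => c * φ x + d * ψ x) y) x
      = c * (deriv (deriv (fun y => σ y * deriv (deriv φ) y)) x
            - deriv (fun y => q y * deriv φ y) x)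
      + d * (deriv (deriv (fun y => σ y * deriv (deriv ψ) y)) x
            - deriv (fun y => q y * deriv ψ y) x) := by
  obtain ⟨f1, f2, f3, f4, f5, f6⟩ := diff_pack σ q hσc hqc φ hφ
  obtain ⟨g1, g2, g3, g4, g5, g6⟩ := diff_pack σ q hσc hqc ψ hψ
  have e1 : deriv (fun x => c * φ x + d * ψ x) = fun x => c * deriv φ x + d * deriv ψ x :=
    deriv_comb f1 g1 c d
  have e2 : deriv (deriv (fun x => c * φ x + d * ψ x))
      = fun x => c * deriv (deriv φ) x + d * deriv (deriv ψ) x := by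
    rw [e1]; exact deriv_comb f2 g2 c d
  have e3' : (fun y => σ y * deriv (deriv (fun x => c * φ x + d * ψ x)) y)
      = fun y => c * (σ y * deriv (deriv φ) y) + d * (σ y * deriv (deriv ψ) y) := by
    funext y; simp only [e2]; ring
  have e3 : deriv (fun y => σ y * deriv (deriv (fun x => c * φ x + d * ψ x)) y)
      = fun y => c * deriv (fun y => σ y * deriv (deriv φ) y) y
          + d * deriv (fun y => σ y * deriv (deriv ψ) y) y := by
    rw [e3']; exact deriv_comb f4 g4 c d
  refine ⟨e1, e2, e3, ?_⟩
  intro x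
  have e4 : deriv (deriv (fun y => σ y * deriv (deriv (fun x => c * φ x + d * ψ x)) y))
      = fun x => c * deriv (deriv (fun y => σ y * deriv (deriv φ) y)) x
          + d * deriv (deriv (fun y => σ y * deriv (deriv ψ) y)) x := by
    rw [e3]; exact deriv_comb f5 g5 c d
  have e5' : (fun y => q y * deriv (fun x => c * φ x + d * ψ x) y)
      = fun y => c * (q y * deriv φ y) + d * (q y * deriv ψ y) := by
    funext y; simp only [e1]; ring
  have e5 : deriv (fun y => q y * deriv (fun x => c * φ x + d * ψ x) y)
      = fun y => c * deriv (fun y => q y * deriv φ y) y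
          + d * deriv (fun y => q y * deriv ψ y) y := by
    rw [e5']; exact deriv_comb f6 g6 c d
  simp only [e4, e5]
  ring

/-- the space of C⁴ solutions of (σφ'')'' - (qφ')' = λρφ with
φ(0) = φ'(0) = φ'(ℓ) = 0 is at most one-dimensional: any two such solutions
are linearly dependent. -/
theorem stmt_5 (ℓ : ℝ) (hℓ : 0 < ℓ) (ρ σ q : ℝ → ℝ) (lam : ℝ) (hlam : 0 < lam)
    (hρc : Continuous ρ) (hσc : ContDiff ℝ 2 σ) (hqc : ContDiff ℝ 1 q)
    (hρ : ∀ x ∈ Set.Icc 0 ℓ, 0 < ρ x)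
    (hσ : ∀ x ∈ Set.Icc 0 ℓ, 0 < σ x)
    (hq : ∀ x ∈ Set.Icc 0 ℓ, 0 ≤ q x)
    (φ ψ : ℝ → ℝ) (hφ : ContDiff ℝ 4 φ) (hψ : ContDiff ℝ 4 ψ)
    (hodeφ : ∀ x ∈ Set.Icc 0 ℓ,
      deriv (deriv (fun y => σ y * deriv (deriv φ) y)) x
        - deriv (fun y => q y * deriv φ y) x = lam * ρ x * φ x)
    (hodeψ : ∀ x ∈ Set.Icc 0 ℓ,
      deriv (deriv (fun y => σ y * deriv (deriv ψ) y)) x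
        - deriv (fun y => q y * deriv ψ y) x = lam * ρ x * ψ x)
    (hbcφ : φ 0 = 0 ∧ deriv φ 0 = 0 ∧ deriv φ ℓ = 0)
    (hbcψ : ψ 0 = 0 ∧ deriv ψ 0 = 0 ∧ deriv ψ ℓ = 0) :
    ∃ c d : ℝ, (c ≠ 0 ∨ d ≠ 0) ∧ ∀ x ∈ Set.Icc 0 ℓ, c * φ x + d * ψ x = 0 := by
  obtain ⟨hφ0, hφ'0, hφ'ℓ⟩ := hbcφ
  obtain ⟨hψ0, hψ'0, hψ'ℓ⟩ := hbcψ
  have hwcd : ∀ c d : ℝ, ContDiff ℝ 4 (fun x => c * φ x + d * ψ x) :=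
    fun c d => (contDiff_const.mul hφ).add (contDiff_const.mul hψ)
  have hodew : ∀ c d : ℝ, ∀ t ∈ Set.Icc 0 ℓ,
      deriv (deriv (fun y => σ y * deriv (deriv (fun x => c * φ x + d * ψ x)) y)) t
        - deriv (fun y => q y * deriv (fun x => c * φ x + d * ψ x) y) t
        = lam * ρ t * (c * φ t + d * ψ t) := by
    intro c d t ht
    rw [(comb_lin σ q hσc hqc φ ψ hφ hψ c d).2.2.2 t, hodeφ t ht, hodeψ t ht]; ring
  have w0 : ∀ c d : ℝ, (fun x => c * φ x + d * ψ x) 0 = 0 := by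
    intro c d; simp only; rw [hφ0, hψ0]; ring
  have w1 : ∀ c d : ℝ, deriv (fun x => c * φ x + d * ψ x) 0 = 0 := by
    intro c d
    simp only [(comb_lin σ q hσc hqc φ ψ hφ hψ c d).1]
    rw [hφ'0, hψ'0]; ring
  have w1ℓ : ∀ c d : ℝ, deriv (fun x => c * φ x + d * ψ x) ℓ = 0 := by
    intro c d
    simp only [(comb_lin σ q hσc hqc φ ψ hφ hψ c d).1]
    rw [hφ'ℓ, hψ'ℓ]; ring
  have w2 : ∀ c d : ℝ, deriv (deriv (fun x => c * φ x + d * ψ x)) 0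
      = c * deriv (deriv φ) 0 + d * deriv (deriv ψ) 0 := by
    intro c d
    simp only [(comb_lin σ q hσc hqc φ ψ hφ hψ c d).2.1]
  have w3 : ∀ c d : ℝ,
      deriv (fun y => σ y * deriv (deriv (fun x => c * φ x + d * ψ x)) y) 0
        - q 0 * deriv (fun x => c * φ x + d * ψ x) 0
      = c * deriv (fun y => σ y * deriv (deriv φ) y) 0
        + d * deriv (fun y => σ y * deriv (deriv ψ) y) 0 := by
    intro c d
    simp only [(comb_lin σ q hσc hqc φ ψ hφ hψ c d).2.2.1]
    simp only [(comb_lin σ q hσc hqc φ ψ hφ hψ c d).1]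
    rw [hφ'0, hψ'0]; ring
  have zero_case : ∀ c d : ℝ,
      c * deriv (deriv φ) 0 + d * deriv (deriv ψ) 0 = 0 →
      c * deriv (fun y => σ y * deriv (deriv φ) y) 0
        + d * deriv (fun y => σ y * deriv (deriv ψ) y) 0 = 0 →
      ∀ x ∈ Set.Icc 0 ℓ, c * φ x + d * ψ x = 0 := by
    intro c d hA hB x hx
    have key : ∀ c' d' : ℝ,
        c' * deriv (deriv φ) 0 + d' * deriv (deriv ψ) 0 = 0 →
        c' * deriv (fun y => σ y * deriv (deriv φ) y) 0
          + d' * deriv (fun y => σ y * deriv (deriv ψ) y) 0 = 0 →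
        0 ≤ c' * φ x + d' * ψ x := by
      intro c' d' hA' hB'
      exact (nonneg_prop ℓ hℓ ρ σ q lam hlam hρc hσc hqc hρ hσ hq
        (fun x => c' * φ x + d' * ψ x) (hwcd c' d') (hodew c' d')
        (le_of_eq (w0 c' d').symm) (le_of_eq (w1 c' d').symm)
        (by rw [w2 c' d', hA', mul_zero])
        (by rw [w3 c' d', hB'])
        x hx).1
    have p1 := key c d hA hB
    have p2 := key (-c) (-d) (by linear_combination -hA) (by linear_combination -hB)
    linarith
  by_cases hD : deriv (deriv φ) 0 * deriv (fun y => σ y * deriv (deriv ψ) y) 0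
      - deriv (deriv ψ) 0 * deriv (fun y => σ y * deriv (deriv φ) y) 0 = 0
  · by_cases ha : deriv (deriv φ) 0 = 0 ∧ deriv (deriv ψ) 0 = 0
    · by_cases hb : deriv (fun y => σ y * deriv (deriv φ) y) 0 = 0
          ∧ deriv (fun y => σ y * deriv (deriv ψ) y) 0 = 0
      · exact ⟨1, 0, Or.inl one_ne_zero,
          zero_case 1 0 (by rw [ha.1]; ring) (by rw [hb.1]; ring)⟩
      · refine ⟨deriv (fun y => σ y * deriv (deriv ψ) y) 0,
          -(deriv (fun y => σ y * deriv (deriv φ) y) 0), ?_,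
          zero_case _ _ (by rw [ha.1, ha.2]; ring) (by ring)⟩
        rcases not_and_or.mp hb with h | h
        · exact Or.inr (neg_ne_zero.2 h)
        · exact Or.inl h
    · refine ⟨deriv (deriv ψ) 0, -(deriv (deriv φ) 0), ?_,
        zero_case _ _ (by ring) (by linear_combination -hD)⟩
      rcases not_and_or.mp ha with h | h
      · exact Or.inr (neg_ne_zero.2 h)
      · exact Or.inl h
  · exfalso
    have hs := strict_pos ℓ hℓ ρ σ q lam hlam hρc hσc hqc hρ hσ hq
      (fun x => (-(deriv (deriv ψ) 0)
          / (deriv (deriv φ) 0 * deriv (fun y => σ y * deriv (deriv ψ) y) 0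
            - deriv (deriv ψ) 0 * deriv (fun y => σ y * deriv (deriv φ) y) 0)) * φ x
        + (deriv (deriv φ) 0
          / (deriv (deriv φ) 0 * deriv (fun y => σ y * deriv (deriv ψ) y) 0
            - deriv (deriv ψ) 0 * deriv (fun y => σ y * deriv (deriv φ) y) 0)) * ψ x)
      (hwcd _ _) (hodew _ _) (w0 _ _) (w1 _ _)
      (by rw [w2]; field_simp; ring)
      (by
        rw [w3, div_mul_eq_mul_div, div_mul_eq_mul_div, ← add_div,
          div_eq_one_iff_eq hD]; ring)
    rw [w1ℓ] at hs
    exact lt_irrefl 0 hs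
end

section
/- Let ρ, σ, q satisfy ρ, σ > 0, q ≥ 0 on [0,ℓ], and let λ > 0 be an eigenvalue of (σ φ'')'' - (q φ')' = λ ρ φ with clamped boundary conditions φ(0) = φ'(0) = φ(ℓ) = φ'(ℓ) = 0, with eigenfunction Φ. Then Φ''(ℓ) ≠ 0. -/
open Real Set


lemma sign_prop (ℓ : ℝ) (hℓ : 0 < ℓ) (u P T q r : ℝ → ℝ)
    (huc : Continuous u) (hu1c : Continuous (deriv u))
    (hPc : Continuous P) (hTc : Continuous T) (hqc : Continuous q)
    (hud : Differentiable ℝ u) (hu1d : Differentiable ℝ (deriv u))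
    (hPd : Differentiable ℝ P) (hTd : Differentiable ℝ T)
    (hq : ∀ x ∈ Icc 0 ℓ, 0 ≤ q x) (hr : ∀ x ∈ Icc 0 ℓ, 0 ≤ r x)
    (hsign : ∀ x ∈ Icc 0 ℓ, 0 < P x → 0 < deriv (deriv u) x)
    (hderivP : ∀ x ∈ Icc 0 ℓ, deriv P x = T x + q x * deriv u x)
    (hderivT : ∀ x ∈ Icc 0 ℓ, deriv T x = r x * u x)
    (hul : u ℓ = 0) (hu1l : deriv u ℓ = 0) (hPl : P ℓ = 0) (hTl : T ℓ < 0) :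
    0 < u 0 := by
  set c := T ℓ with hc
  set g : ℝ → ℝ := fun x => T x + q x * deriv u x with hg
  have hgc : Continuous g := hTc.add (hqc.mul hu1c)
  -- the chain lemma
  have chain : ∀ x ∈ Icc 0 ℓ, (∀ y ∈ Icc x ℓ, deriv P y ≤ c / 2) →
      (∀ y ∈ Ico x ℓ, 0 < u y ∧ deriv u y < 0) ∧ (∀ y ∈ Icc x ℓ, deriv P y ≤ c) := by
    intro x hx hC
    have hsub : Icc x ℓ ⊆ Icc 0 ℓ := Icc_subset_Icc hx.1 le_rfl
    have hPanti : StrictAntiOn P (Icc x ℓ) := by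
      apply strictAntiOn_of_deriv_neg (convex_Icc x ℓ) hPc.continuousOn
      intro y hy
      rw [interior_Icc] at hy
      have := hC y (Ioo_subset_Icc_self hy)
      linarith [hTl]
    have hu2pos : ∀ y ∈ Ico x ℓ, 0 < deriv (deriv u) y := by
      intro y hy
      have hyI : y ∈ Icc x ℓ := Ico_subset_Icc_self hy
      have : P ℓ < P y := hPanti hyI (right_mem_Icc.mpr hx.2) hy.2
      exact hsign y (hsub hyI) (by linarith [hPl])
    have hu1mono : StrictMonoOn (deriv u) (Icc x ℓ) := by
      apply strictMonoOn_of_deriv_pos (convex_Icc x ℓ) hu1c.continuousOn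
      intro y hy
      rw [interior_Icc] at hy
      exact hu2pos y (Ioo_subset_Ico_self hy)
    have hu1neg : ∀ y ∈ Ico x ℓ, deriv u y < 0 := by
      intro y hy
      have : deriv u y < deriv u ℓ :=
        hu1mono (Ico_subset_Icc_self hy) (right_mem_Icc.mpr hx.2) hy.2
      linarith [hu1l]
    have huanti : StrictAntiOn u (Icc x ℓ) := by
      apply strictAntiOn_of_deriv_neg (convex_Icc x ℓ) huc.continuousOn
      intro y hy
      rw [interior_Icc] at hy
      exact hu1neg y (Ioo_subset_Ico_self hy)
    have hupos : ∀ y ∈ Ico x ℓ, 0 < u y := by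
      intro y hy
      have : u ℓ < u y := huanti (Ico_subset_Icc_self hy) (right_mem_Icc.mpr hx.2) hy.2
      linarith [hul]
    refine ⟨fun y hy => ⟨hupos y hy, hu1neg y hy⟩, ?_⟩
    have hTmono : MonotoneOn T (Icc x ℓ) := by
      apply monotoneOn_of_deriv_nonneg (convex_Icc x ℓ) hTc.continuousOn
        (hTd.differentiableOn)
      intro y hy
      rw [interior_Icc] at hy
      rw [hderivT y (hsub (Ioo_subset_Icc_self hy))]
      exact mul_nonneg (hr y (hsub (Ioo_subset_Icc_self hy)))
        (hupos y (Ioo_subset_Ico_self hy)).le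
    intro y hy
    rw [hderivP y (hsub hy)]
    have hTy : T y ≤ c := hTmono hy (right_mem_Icc.mpr hx.2) hy.2
    have hqy : 0 ≤ q y := hq y (hsub hy)
    have hu1y : deriv u y ≤ 0 := by
      rcases eq_or_lt_of_le hy.2 with h | h
      · rw [h, hu1l]
      · exact (hu1neg y ⟨hy.1, h⟩).le
    nlinarith
  -- the set A
  set A : Set ℝ := {x | x ∈ Icc 0 ℓ ∧ ∀ y ∈ Icc x ℓ, deriv P y ≤ c / 2} with hA
  have hlA : ℓ ∈ A := by
    refine ⟨right_mem_Icc.mpr hℓ.le, fun y hy => ?_⟩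
    have hyl : y = ℓ := le_antisymm hy.2 hy.1
    subst hyl
    rw [hderivP y (right_mem_Icc.mpr hℓ.le), hu1l, mul_zero, add_zero]
    linarith
  have hAne : A.Nonempty := ⟨ℓ, hlA⟩
  have hAbdd : BddBelow A := ⟨0, fun x hx => hx.1.1⟩
  set x₀ := sInf A with hx₀
  have hx₀mem : x₀ ∈ Icc 0 ℓ := by
    constructor
    · exact le_csInf hAne fun x hx => hx.1.1
    · exact csInf_le hAbdd hlA
  have hx₀A : x₀ ∈ A := by
    rcases eq_or_lt_of_le hx₀mem.2 with h | h
    · rwa [h]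
    · refine ⟨hx₀mem, ?_⟩
      have hIoc : ∀ y ∈ Ioc x₀ ℓ, g y ≤ c / 2 := by
        intro y hy
        obtain ⟨x, hxA, hxy⟩ := exists_lt_of_csInf_lt hAne hy.1
        have := hxA.2 y ⟨hxy.le, hy.2⟩
        rwa [hderivP y ⟨le_trans hxA.1.1 hxy.le, hy.2⟩] at this
      have hclosed : IsClosed {y | g y ≤ c / 2} := isClosed_le hgc continuous_const
      have hIcc : Icc x₀ ℓ ⊆ {y | g y ≤ c / 2} := by
        rw [← closure_Ioc h.ne]
        exact hclosed.closure_subset_iff.mpr hIoc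
      intro y hy
      rw [hderivP y ⟨le_trans hx₀mem.1 hy.1, hy.2⟩]
      exact hIcc hy
  -- strengthened bound on [x₀, ℓ]
  obtain ⟨hchain1, hchain2⟩ := chain x₀ hx₀mem hx₀A.2
  -- x₀ must be 0
  have hx₀0 : x₀ = 0 := by
    by_contra h0
    have hx₀pos : 0 < x₀ := lt_of_le_of_ne hx₀mem.1 (Ne.symm h0)
    -- g x₀ ≤ c < c/2, so by continuity g < c/2 near x₀
    have hgx₀ : g x₀ < c / 2 := by
      have := hchain2 x₀ (left_mem_Icc.mpr hx₀mem.2)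
      rw [hderivP x₀ hx₀mem] at this
      linarith
    have : ∀ᶠ y in nhds x₀, g y < c / 2 :=
      (hgc.continuousAt).eventually_lt_const hgx₀
    obtain ⟨δ, hδ, hball⟩ := Metric.eventually_nhds_iff.mp this
    set ε := min (δ / 2) x₀ with hε
    have hεpos : 0 < ε := lt_min (by linarith) hx₀pos
    have hmem : x₀ - ε ∈ A := by
      constructor
      · constructor
        · simp [hε]
        · linarith [hx₀mem.2]
      · intro y hy
        rcases le_or_gt x₀ y with h | h
        · exact hx₀A.2 y ⟨h, hy.2⟩
        · have hyI : y ∈ Icc 0 ℓ := ⟨le_trans (by simp [hε]) hy.1, hy.2⟩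
          rw [hderivP y hyI]
          have : dist y x₀ < δ := by
            rw [Real.dist_eq, abs_lt]
            constructor
            · have : x₀ - ε ≤ y := hy.1
              have : ε ≤ δ / 2 := min_le_left _ _
              linarith
            · linarith
          linarith [hball this]
    have : x₀ ≤ x₀ - ε := csInf_le hAbdd hmem
    linarith
  have := hchain1 0 (by rw [hx₀0] at *; exact ⟨le_rfl, hℓ⟩)
  exact this.1

lemma energy_ineq (m Q R K a b e p t qx rx sx : ℝ) (hm0 : 0 < m) (hσx : m ≤ sx)
    (hpe : p = sx * e) (hqx0 : 0 ≤ qx) (hQx : qx ≤ Q) (hr0 : 0 ≤ rx) (hRx : rx ≤ R)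
    (hKm : m * K = 2*m + 1 + m*Q + m*R) :
    0 ≤ 2*a*b + 2*b*e + 2*p*(t + qx*b) + 2*t*(rx*a)
      + K * (a^2 + b^2 + p^2 + t^2) := by
  have hQ0 : 0 ≤ Q := le_trans hqx0 hQx
  have hR0 : 0 ≤ R := le_trans hr0 hRx
  have hpe2 : p^2 = sx^2 * e^2 := by rw [hpe]; ring
  have f3 : m^2 * e^2 ≤ p^2 := by
    nlinarith [mul_nonneg (mul_nonneg (sub_nonneg.2 hσx) (by linarith : (0:ℝ) ≤ sx + m))
      (sq_nonneg e)]
  have hKS : m * (K * (a^2 + b^2 + p^2 + t^2))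
      = (2*m + 1 + m*Q + m*R) * (a^2 + b^2 + p^2 + t^2) := by
    rw [← hKm]; ring
  have f1 : 0 ≤ m * (a+b)^2 := mul_nonneg hm0.le (sq_nonneg _)
  have f2 : 0 ≤ (m*e+b)^2 := sq_nonneg _
  have f4 : 0 ≤ m * (p+t)^2 := mul_nonneg hm0.le (sq_nonneg _)
  have f5 : 0 ≤ m * qx * (p+b)^2 := mul_nonneg (mul_nonneg hm0.le hqx0) (sq_nonneg _)
  have f6 : 0 ≤ m * (Q-qx) * (p^2+b^2) :=
    mul_nonneg (mul_nonneg hm0.le (sub_nonneg.2 hQx)) (by positivity)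
  have f7 : 0 ≤ m * rx * (t+a)^2 := mul_nonneg (mul_nonneg hm0.le hr0) (sq_nonneg _)
  have f8 : 0 ≤ m * (R-rx) * (t^2+a^2) :=
    mul_nonneg (mul_nonneg hm0.le (sub_nonneg.2 hRx)) (by positivity)
  have s1 : 0 ≤ m * a^2 := by positivity
  have s2 : 0 ≤ m * Q * a^2 := by positivity
  have s3 : 0 ≤ a^2 := sq_nonneg _
  have s4 : 0 ≤ m * b^2 := by positivity
  have s5 : 0 ≤ m * R * b^2 := by positivity
  have s6 : 0 ≤ m * p^2 := by positivity
  have s7 : 0 ≤ m * R * p^2 := by positivity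
  have s8 : 0 ≤ m * t^2 := by positivity
  have s9 : 0 ≤ m * Q * t^2 := by positivity
  have s10 : 0 ≤ t^2 := sq_nonneg _
  have hsuff : 0 ≤ m * (2*a*b + 2*b*e + 2*p*(t + qx*b) + 2*t*(rx*a)
      + K * (a^2 + b^2 + p^2 + t^2)) := by
    linarith [f1, f2, f3, f4, f5, f6, f7, f8, s1, s2, s3, s4, s5, s6, s7, s8, s9, s10, hKS]
  by_contra hX
  push_neg at hX
  nlinarith [mul_pos hm0 (neg_pos.2 hX)]

/-- for an eigenfunction Φ of the clamped fourth-order problem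
(σΦ'')'' - (qΦ')' = λρΦ, Φ(0) = Φ'(0) = Φ(ℓ) = Φ'(ℓ) = 0 with λ > 0,
one has Φ''(ℓ) ≠ 0. -/
theorem stmt_6 (ℓ : ℝ) (hℓ : 0 < ℓ) (ρ σ q : ℝ → ℝ) (lam : ℝ) (hlam : 0 < lam)
    (hρc : Continuous ρ) (hσc : ContDiff ℝ 2 σ) (hqc : ContDiff ℝ 1 q)
    (hρ : ∀ x ∈ Set.Icc 0 ℓ, 0 < ρ x)
    (hσ : ∀ x ∈ Set.Icc 0 ℓ, 0 < σ x)
    (hq : ∀ x ∈ Set.Icc 0 ℓ, 0 ≤ q x)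
    (Φ : ℝ → ℝ) (hΦ : ContDiff ℝ 4 Φ)
    (hode : ∀ x ∈ Set.Icc 0 ℓ,
      deriv (deriv (fun y => σ y * deriv (deriv Φ) y)) x
        - deriv (fun y => q y * deriv Φ y) x = lam * ρ x * Φ x)
    (hbc : Φ 0 = 0 ∧ deriv Φ 0 = 0 ∧ Φ ℓ = 0 ∧ deriv Φ ℓ = 0)
    (hnontriv : ∃ x ∈ Set.Icc 0 ℓ, Φ x ≠ 0) :
    deriv (deriv Φ) ℓ ≠ 0 := by
  intro h2
  obtain ⟨hb0, hb1, hbl, hb1l⟩ := hbc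
  -- regularity ladder
  have h4 : ContDiff ℝ (3 + 1) Φ := by norm_num at hΦ ⊢; exact hΦ
  have hΦd : Differentiable ℝ Φ := (contDiff_succ_iff_deriv.mp h4).1
  have hΦ3 : ContDiff ℝ 3 (deriv Φ) := (contDiff_succ_iff_deriv.mp h4).2.2
  have h3 : ContDiff ℝ (2 + 1) (deriv Φ) := by norm_num at hΦ3 ⊢; exact hΦ3
  have hu1d : Differentiable ℝ (deriv Φ) := (contDiff_succ_iff_deriv.mp h3).1
  have hΦ2 : ContDiff ℝ 2 (deriv (deriv Φ)) := (contDiff_succ_iff_deriv.mp h3).2.2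
  have h2' : ContDiff ℝ (1 + 1) (deriv (deriv Φ)) := by norm_num at hΦ2 ⊢; exact hΦ2
  have hu2d : Differentiable ℝ (deriv (deriv Φ)) := (contDiff_succ_iff_deriv.mp h2').1
  set P : ℝ → ℝ := fun y => σ y * deriv (deriv Φ) y with hPdef
  have hPcd : ContDiff ℝ 2 P := hσc.mul hΦ2
  have hPcd' : ContDiff ℝ (1 + 1) P := by norm_num at hPcd ⊢; exact hPcd
  have hPd : Differentiable ℝ P := (contDiff_succ_iff_deriv.mp hPcd').1
  have hdP1 : ContDiff ℝ 1 (deriv P) := (contDiff_succ_iff_deriv.mp hPcd').2.2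
  have hqu1 : ContDiff ℝ 1 (fun y => q y * deriv Φ y) :=
    hqc.mul (hΦ3.of_le (by norm_num))
  set T : ℝ → ℝ := fun x => deriv P x - q x * deriv Φ x with hTdef
  have hT1 : ContDiff ℝ 1 T := hdP1.sub hqu1
  have hTd : Differentiable ℝ T := hT1.differentiable one_ne_zero
  have hTc : Continuous T := hTd.continuous
  have derivP : ∀ x, deriv P x = T x + q x * deriv Φ x := by
    intro x; rw [hTdef]; ring
  have derivT : ∀ x ∈ Icc 0 ℓ, deriv T x = lam * ρ x * Φ x := by
    intro x hx
    have hd : deriv T x = deriv (deriv P) x - deriv (fun y => q y * deriv Φ y) x := by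
      rw [hTdef]
      exact deriv_sub ((hdP1.differentiable one_ne_zero) x) ((hqu1.differentiable one_ne_zero) x)
    rw [hd]
    exact hode x hx
  have hPl : P ℓ = 0 := by rw [hPdef]; simp [h2]
  have hΦc : Continuous Φ := hΦd.continuous
  have hu1c : Continuous (deriv Φ) := hu1d.continuous
  have hPc : Continuous P := hPd.continuous
  have hqcc : Continuous q := hqc.continuous
  have hr : ∀ x ∈ Icc 0 ℓ, 0 ≤ lam * ρ x := fun x hx => (mul_pos hlam (hρ x hx)).le
  rcases lt_trichotomy (T ℓ) 0 with hTl | hTl | hTl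
  · -- T ℓ < 0 : apply sign_prop to Φ
    have := sign_prop ℓ hℓ Φ P T q (fun x => lam * ρ x) hΦc hu1c hPc hTc hqcc
      hΦd hu1d hPd hTd hq hr
      (fun x hx hp => by
        have hp' : 0 < σ x * deriv (deriv Φ) x := hp
        by_contra hle
        push_neg at hle
        nlinarith [hσ x hx])
      (fun x _ => derivP x) derivT hbl hb1l hPl hTl
    linarith [this, hb0.symm ▸ this]
  · -- T ℓ = 0 : uniqueness implies Φ ≡ 0 on [0,ℓ], contradiction
    obtain ⟨w, hw, hwne⟩ := hnontriv
    have hne : (Icc (0:ℝ) ℓ).Nonempty := nonempty_Icc.mpr hℓ.le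
    obtain ⟨xm, hxm, hmin⟩ := isCompact_Icc.exists_isMinOn hne (hσc.continuous.continuousOn)
    set m := σ xm with hm
    have hm0 : 0 < m := hσ xm hxm
    have hmle : ∀ x ∈ Icc 0 ℓ, m ≤ σ x := fun x hx => hmin hx
    obtain ⟨xq, hxq, hmaxq⟩ := isCompact_Icc.exists_isMaxOn hne hqcc.continuousOn
    set Q := q xq with hQdef
    have hQ0 : 0 ≤ Q := hq xq hxq
    have hQle : ∀ x ∈ Icc 0 ℓ, q x ≤ Q := fun x hx => hmaxq hx
    obtain ⟨xr, hxr, hmaxr⟩ := isCompact_Icc.exists_isMaxOn hne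
      ((continuous_const.mul hρc).continuousOn)
    set R := lam * ρ xr with hRdef
    have hR0 : 0 ≤ R := hr xr hxr
    have hRle : ∀ x ∈ Icc 0 ℓ, lam * ρ x ≤ R := fun x hx => hmaxr hx
    set K := 2 + 1/m + Q + R with hKdef
    have hKm : m * K = 2*m + 1 + m*Q + m*R := by
      rw [hKdef]; field_simp
    set E : ℝ → ℝ := fun x => Φ x ^ 2 + deriv Φ x ^ 2 + P x ^ 2 + T x ^ 2 with hE
    set D : ℝ → ℝ := fun x => 2 * Φ x * deriv Φ x + 2 * deriv Φ x * deriv (deriv Φ) x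
        + 2 * P x * deriv P x + 2 * T x * deriv T x with hD
    have hEderiv : ∀ x, HasDerivAt E (D x) x := by
      intro x
      have h1 : HasDerivAt (fun y => Φ y ^ 2) (2 * Φ x * deriv Φ x) x := by
        simpa using ((hΦd x).hasDerivAt).fun_pow 2
      have h2 : HasDerivAt (fun y => deriv Φ y ^ 2) (2 * deriv Φ x * deriv (deriv Φ) x) x := by
        simpa using ((hu1d x).hasDerivAt).fun_pow 2
      have h3 : HasDerivAt (fun y => P y ^ 2) (2 * P x * deriv P x) x := by
        simpa using ((hPd x).hasDerivAt).fun_pow 2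
      have h4 : HasDerivAt (fun y => T y ^ 2) (2 * T x * deriv T x) x := by
        simpa using ((hTd x).hasDerivAt).fun_pow 2
      exact ((h1.add h2).add h3).add h4
    have key : ∀ x ∈ Icc 0 ℓ, 0 ≤ D x + K * E x := by
      intro x hx
      have hDx : D x = 2 * Φ x * deriv Φ x + 2 * deriv Φ x * deriv (deriv Φ) x
          + 2 * P x * (T x + q x * deriv Φ x) + 2 * T x * (lam * ρ x * Φ x) := by
        simp only [hD]
        rw [derivP x, derivT x hx]
      have hEx : E x = Φ x ^ 2 + deriv Φ x ^ 2 + P x ^ 2 + T x ^ 2 := by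
        simp only [hE]
      rw [hDx, hEx]
      have hpe : P x = σ x * deriv (deriv Φ) x := by simp only [hPdef]
      have := energy_ineq m Q R K (Φ x) (deriv Φ x) (deriv (deriv Φ) x) (P x) (T x)
        (q x) (lam * ρ x) (σ x) hm0 (hmle x hx) hpe (hq x hx) (hQle x hx)
        (hr x hx) (hRle x hx) hKm
      linarith [this]
    set G : ℝ → ℝ := fun x => E x * Real.exp (K * x) with hG
    have hexp : ∀ x : ℝ, HasDerivAt (fun y => Real.exp (K * y)) (Real.exp (K * x) * K) x := by
      intro x
      have : HasDerivAt (fun y : ℝ => K * y) K x := by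
        simpa using (hasDerivAt_id x).const_mul K
      exact this.exp
    have hGderiv : ∀ x, HasDerivAt G (D x * Real.exp (K * x)
        + E x * (Real.exp (K * x) * K)) x := fun x => (hEderiv x).mul (hexp x)
    have hGc : Continuous G := by
      have hEc : Continuous E :=
        (((hΦc.pow 2).add (hu1c.pow 2)).add (hPc.pow 2)).add (hTc.pow 2)
      exact hEc.mul (Real.continuous_exp.comp (continuous_const.mul continuous_id))
    have hGmono : MonotoneOn G (Icc 0 ℓ) := by
      apply monotoneOn_of_deriv_nonneg (convex_Icc 0 ℓ) hGc.continuousOn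
      · intro x hx
        exact (hGderiv x).differentiableAt.differentiableWithinAt
      · intro x hx
        rw [interior_Icc] at hx
        rw [(hGderiv x).deriv]
        have hk := key x (Ioo_subset_Icc_self hx)
        nlinarith [mul_nonneg hk (Real.exp_pos (K * x)).le]
    have hEl : E ℓ = 0 := by
      simp only [hE]
      rw [hbl, hb1l, hPl, hTl]
      ring
    have hGw : G w ≤ 0 := by
      have h := hGmono hw (right_mem_Icc.mpr hℓ.le) hw.2
      have hGl : G ℓ = 0 := by simp only [hG]; rw [hEl]; ring
      rw [hGl] at h
      exact h
    have hEw : E w ≤ 0 := by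
      have hep := Real.exp_pos (K * w)
      have hGw' : E w * Real.exp (K * w) ≤ 0 := hGw
      nlinarith
    have : Φ w ^ 2 ≤ 0 := by
      have h1 := sq_nonneg (deriv Φ w)
      have h2 := sq_nonneg (P w)
      have h3 := sq_nonneg (T w)
      have hEw' : Φ w ^ 2 + deriv Φ w ^ 2 + P w ^ 2 + T w ^ 2 ≤ 0 := hEw
      nlinarith
    exact hwne (pow_eq_zero_iff (by norm_num)|>.mp (le_antisymm this (sq_nonneg _)))
  · -- 0 < T ℓ : apply sign_prop to -Φ
    have hd1 : deriv (fun x => -Φ x) = fun x => -deriv Φ x := by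
      funext x; exact deriv.neg
    have hd2 : deriv (deriv (fun x => -Φ x)) = fun x => -deriv (deriv Φ) x := by
      rw [hd1]; funext x; exact deriv.neg
    have hdP : deriv (fun x => -P x) = fun x => -deriv P x := by
      funext x; exact deriv.neg
    have hdT : deriv (fun x => -T x) = fun x => -deriv T x := by
      funext x; exact deriv.neg
    have := sign_prop ℓ hℓ (fun x => -Φ x) (fun x => -P x) (fun x => -T x) q
      (fun x => lam * ρ x)
      (hΦc.neg) (by rw [hd1]; exact hu1c.neg) (hPc.neg) (hTc.neg) hqcc
      (hΦd.neg) (by rw [hd1]; exact hu1d.neg) (hPd.neg) (hTd.neg) hq hr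
      (fun x hx hp => by
        rw [hd2]
        have hp' : 0 < -(σ x * deriv (deriv Φ) x) := hp
        show 0 < -deriv (deriv Φ) x
        by_contra hle
        push_neg at hle
        nlinarith [hσ x hx])
      (fun x hx => by
        rw [hdP, hd1]
        simp only
        rw [derivP x]
        ring)
      (fun x hx => by
        rw [hdT]
        simp only
        rw [derivT x hx]
        ring)
      (by simp [hbl]) (by rw [hd1]; simp [hb1l]) (by simp [hPl]) (by simpa using hTl)
    simp [hb0] at this
end

section
/- Let γ > 0. For each sufficiently large n ∈ ℕ, the equation cos(μγ) cosh(μγ) = 1 has a solution μ_n with μ_n = (π/γ)(n - 1/2) + O(e^{-μ_n γ}); more precisely, |μ_n - (π/γ)(n - 1/2)| ≤ C e^{-n} for some constant C and all large n. -/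
open Real

/-- Auxiliary: IVT for `cos x * cosh x` between two points where it is `< 1` and `> 1`. -/
lemma aux_ivt (a b : ℝ) (ha : Real.cos a * Real.cosh a < 1) (hb : 1 < Real.cos b * Real.cosh b) :
    ∃ x ∈ Set.uIcc a b, Real.cos x * Real.cosh x = 1 := by
  have hc : ContinuousOn (fun x => Real.cos x * Real.cosh x) (Set.uIcc a b) :=
    (Real.continuous_cos.mul Real.continuous_cosh).continuousOn
  have := intermediate_value_uIcc hc (a := a) (b := b)
  have h1 : (1 : ℝ) ∈ Set.uIcc (Real.cos a * Real.cosh a) (Real.cos b * Real.cosh b) :=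
    Set.mem_uIcc.mpr (Or.inl ⟨ha.le, hb.le⟩)
  obtain ⟨x, hx, hfx⟩ := this h1
  exact ⟨x, hx, hfx⟩

/-- for large n the characteristic equation
cos(μγ)cosh(μγ) = 1 has a root μ_n with |μ_n - (π/γ)(n - 1/2)| ≤ C e^{-n}. -/
theorem stmt_12 (γ : ℝ) (hγ : 0 < γ) :
    ∃ C : ℝ, ∃ N : ℕ, ∀ n : ℕ, N ≤ n →
      ∃ μ : ℝ, Real.cos (μ * γ) * Real.cosh (μ * γ) = 1 ∧
        |μ - (π / γ) * ((n : ℝ) - 1 / 2)| ≤ C * Real.exp (-(n : ℝ)) := by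
  refine ⟨1 / γ, 3, fun n hn => ?_⟩
  set xn : ℝ := π * ((n : ℝ) - 1 / 2) with hxn
  set ε : ℝ := Real.exp (-(n : ℝ)) with hε
  have hn3 : (3 : ℝ) ≤ (n : ℝ) := by exact_mod_cast hn
  have hε0 : 0 < ε := Real.exp_pos _
  have hε1 : ε ≤ 1 := Real.exp_le_one_iff.mpr (by linarith)
  have hπ3 : (3 : ℝ) < π := Real.pi_gt_three
  -- sin ε ≥ ε/2
  have hsin2 : ε / 2 ≤ Real.sin ε := by
    have h := Real.sin_gt_sub_cube hε0
    have hcube : ε ^ 3 ≤ ε := by nlinarith [mul_nonneg (mul_nonneg hε0.le (sub_nonneg.mpr hε1)) (by linarith : (0:ℝ) ≤ 1 + ε)]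
    linarith
  have hsinpos : 0 < Real.sin ε := lt_of_lt_of_le (by linarith) hsin2
  -- key estimate: sin ε * (exp (xn - ε) / 2) > 1
  have hkey : 1 < Real.sin ε * (Real.exp (xn - ε) / 2) := by
    have hexp : xn - ε - (n : ℝ) + 1 ≤ Real.exp (xn - ε - (n : ℝ)) :=
      Real.add_one_le_exp _
    have hprod : ε * Real.exp (xn - ε) = Real.exp (xn - ε - (n : ℝ)) := by
      rw [hε, ← Real.exp_add]; ring_nf
    have hxnlb : 3 * ((n : ℝ) - 1 / 2) ≤ xn := by
      have : (0:ℝ) ≤ (n : ℝ) - 1 / 2 := by linarith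
      nlinarith
    have hεexp : 2 * (n : ℝ) - 5 / 2 ≤ ε * Real.exp (xn - ε) := by
      rw [hprod]; linarith
    have hepos : (0:ℝ) < Real.exp (xn - ε) := Real.exp_pos _
    nlinarith [mul_le_mul_of_nonneg_right hsin2 hepos.le]
  -- the identity cos (xn + t) = (-1)^n * sin t
  have hcos : ∀ t : ℝ, Real.cos (xn + t) = (-1 : ℝ) ^ n * Real.sin t := by
    intro t
    have h1 : xn + t = (n : ℝ) * π - (π / 2 - t) := by rw [hxn]; ring
    rw [h1, Real.cos_nat_mul_pi_sub, Real.cos_pi_div_two_sub]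
  -- cosh lower bound
  have hcosh : ∀ t : ℝ, Real.exp t / 2 ≤ Real.cosh t := by
    intro t
    rw [Real.cosh_eq]
    have := (Real.exp_pos (-t)).le
    linarith
  have hcoshpos : ∀ t : ℝ, 0 < Real.cosh t := Real.cosh_pos
  -- in both parity cases, produce a < value and > value at xn ∓ ε / xn ± ε
  have hmono : Real.exp (xn - ε) ≤ Real.exp (xn + ε) :=
    Real.exp_le_exp.mpr (by linarith)
  obtain ⟨x, hx, hfx⟩ :
      ∃ x ∈ Set.uIcc (xn - ε) (xn + ε), Real.cos x * Real.cosh x = 1 := by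
    rcases Nat.even_or_odd n with hpar | hpar
    · -- (-1)^n = 1 : cos (xn + t) = sin t
      have hs : ((-1 : ℝ)) ^ n = 1 := hpar.neg_one_pow
      have hA : Real.cos (xn - ε) * Real.cosh (xn - ε) < 1 := by
        have := hcos (-ε)
        rw [hs, one_mul, Real.sin_neg] at this
        have h2 : xn + -ε = xn - ε := by ring
        rw [h2] at this
        rw [this]
        nlinarith [hcoshpos (xn - ε)]
      have hB : 1 < Real.cos (xn + ε) * Real.cosh (xn + ε) := by
        have := hcos ε
        rw [hs, one_mul] at this
        rw [this]
        have h3 : Real.exp (xn - ε) / 2 ≤ Real.cosh (xn + ε) :=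
          le_trans (by linarith [hcosh (xn + ε)]) (le_refl _) |>.trans_eq' rfl |>.trans (le_refl _)
        have h4 : Real.exp (xn - ε) / 2 ≤ Real.cosh (xn + ε) :=
          le_trans (by linarith) (hcosh (xn + ε))
        nlinarith
      exact aux_ivt _ _ hA hB
    · -- (-1)^n = -1 : cos (xn + t) = - sin t
      have hs : ((-1 : ℝ)) ^ n = -1 := hpar.neg_one_pow
      have hA : Real.cos (xn + ε) * Real.cosh (xn + ε) < 1 := by
        have := hcos ε
        rw [hs] at this
        rw [this]
        nlinarith [hcoshpos (xn + ε)]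
      have hB : 1 < Real.cos (xn - ε) * Real.cosh (xn - ε) := by
        have := hcos (-ε)
        rw [hs, Real.sin_neg] at this
        have h2 : xn + -ε = xn - ε := by ring
        rw [h2] at this
        rw [this]
        have h4 : Real.exp (xn - ε) / 2 ≤ Real.cosh (xn - ε) := hcosh _
        nlinarith
      have := aux_ivt _ _ hA hB
      obtain ⟨x, hx, hfx⟩ := this
      exact ⟨x, by rwa [Set.uIcc_comm] at hx, hfx⟩
  -- translate back to μ = x / γ
  have hγ' : γ ≠ 0 := ne_of_gt hγ
  refine ⟨x / γ, ?_, ?_⟩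
  · rw [div_mul_cancel₀ _ hγ']; exact hfx
  · have hbounds : xn - ε ≤ x ∧ x ≤ xn + ε := by
      rw [Set.uIcc_of_le (by linarith)] at hx
      exact ⟨hx.1, hx.2⟩
    have h1 : x / γ - (π / γ) * ((n : ℝ) - 1 / 2) = (x - xn) / γ := by
      rw [hxn]; field_simp
    rw [h1, abs_div, abs_of_pos hγ]
    rw [div_le_iff₀ hγ] at *
    have : |x - xn| ≤ ε := abs_le.mpr ⟨by linarith [hbounds.1], by linarith [hbounds.2]⟩
    calc |x - xn| ≤ ε := this
      _ = 1 / γ * Real.exp (-(n:ℝ)) * γ := by field_simp; exact hε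
end
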